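/- arXiv:1610.06005 — 6 statements merged into one kernel-verified Lean document; each statement's English description precedes it below -/
import Mathlib

section
/- Let n ≥ 2 and let T : ℝ^n → ℝ^m be a linear map. Let Im(μ_T) = {μ_T(P) : P an n-system with unbounded domain} and Im*(μ_T) = {μ_T(P) : P a proper n-system}. If n ≥ 3, let ι : ℝ^{n−1} → ℝ^n be the linear map ι(x_2, …, x_n) = (0, x_2, …, x_n); then Im(μ_T) = Im*(μ_T) ∪ Im(μ_{T∘ι}), where Im(μ_{T∘ι}) = {μ_{T∘ι}(R) : R an (n−1)-system with unbounded domain}. If n = 2, then Im(μ_T) = Im*(μ_T) ∪ {T(0,1)}. -/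
open Filter Set Pointwise Topology

noncomputable section

/-- Points of `ℝ^n`. -/
abbrev RVec (n : ℕ) := Fin n → ℝ

/-- The vector of `ℝ^n` with a `1` in position `j` (0-based) and `0` elsewhere;
`eVec n 0` is the first canonical basis vector `e_1`. -/
def eVec (n : ℕ) (j : ℕ) : RVec n := fun i => if (i : ℕ) = j then 1 else 0

/-- `P` is an `n`-system on the subinterval `I` of `[0,∞)`:
`I` is an order-connected subset of `[0,∞)` with nonempty interior, and conditions
(S1), (S2), (S3) hold at every `q ∈ I`. -/
def IsNSystem (n : ℕ) (I : Set ℝ) (P : ℝ → RVec n) : Prop :=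
  I ⊆ Set.Ici (0 : ℝ) ∧ I.OrdConnected ∧ (interior I).Nonempty ∧
  ∀ q ∈ I,
    ((∀ i, 0 ≤ P q i) ∧ Monotone (P q) ∧ (∑ i, P q i) = q) ∧
    ∃ ε > (0 : ℝ), ∃ k ℓ : Fin n,
      (∀ t ∈ I ∩ Set.Icc (q - ε) q, P t = P q + (t - q) • eVec n ℓ) ∧
      (∀ t ∈ I ∩ Set.Icc q (q + ε), P t = P q + (t - q) • eVec n k) ∧
      (q ∈ interior I → ℓ < k → ∀ i : Fin n, ℓ ≤ i → i ≤ k → P q i = P q ℓ)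

/-- `P` is a proper `n`-system on `I`: it is an `n`-system whose first component is
unbounded (by the monotonicity (S1) of the components, this is equivalent to all
components simultaneously exceeding any given bound). -/
def IsProperSys (n : ℕ) (I : Set ℝ) (P : ℝ → RVec n) : Prop :=
  IsNSystem n I P ∧ ∀ M : ℝ, ∃ q ∈ I, ∀ i, M < P q i

/-- The set `F(P)` of limits of `q_i⁻¹ • P(q_i)` along strictly increasing unbounded
sequences `(q_i)` in `I`. -/
def FSet (n : ℕ) (I : Set ℝ) (P : ℝ → RVec n) : Set (RVec n) :=
  {x | ∃ q : ℕ → ℝ, (∀ i, q i ∈ I) ∧ StrictMono q ∧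
    Tendsto q atTop atTop ∧ Tendsto (fun i => (q i)⁻¹ • P (q i)) atTop (𝓝 x)}

/-- The set `F(P, e₁)`: as `F(P)`, but with the extra requirement that the right
derivative of `P` at each `q_i` is the first basis vector `e_1`. -/
def FSetE1 (n : ℕ) (I : Set ℝ) (P : ℝ → RVec n) : Set (RVec n) :=
  {x | ∃ q : ℕ → ℝ, (∀ i, q i ∈ I) ∧ StrictMono q ∧ Tendsto q atTop atTop ∧
    (∀ i, ∃ ε > (0 : ℝ), ∀ t ∈ I ∩ Set.Icc (q i) (q i + ε),
      P t = P (q i) + (t - q i) • eVec n 0) ∧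
    Tendsto (fun i => (q i)⁻¹ • P (q i)) atTop (𝓝 x)}

/-- `q` is a switch number of the `n`-system `P` on `I`: a point of `I` on the boundary
of `I`, or an interior point where the local slopes `e_k` (right) and `e_ℓ` (left)
from (S2) satisfy `k < ℓ`. -/
def IsSwitchNumber (n : ℕ) (I : Set ℝ) (P : ℝ → RVec n) (q : ℝ) : Prop :=
  q ∈ I ∧ (q ∈ frontier I ∨
    (q ∈ interior I ∧ ∃ ε > (0 : ℝ), ∃ k ℓ : Fin n, k < ℓ ∧
      (∀ t ∈ I ∩ Set.Icc (q - ε) q, P t = P q + (t - q) • eVec n ℓ) ∧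
      (∀ t ∈ I ∩ Set.Icc q (q + ε), P t = P q + (t - q) • eVec n k)))

/-- `q` is a division number of the `n`-system `P` on `I`: a point of `I` on the boundary
of `I`, or an interior point where `P` is not differentiable, i.e. where the left and
right slopes from (S2) differ. -/
def IsDivisionNumber (n : ℕ) (I : Set ℝ) (P : ℝ → RVec n) (q : ℝ) : Prop :=
  q ∈ I ∧ (q ∈ frontier I ∨
    (q ∈ interior I ∧ ∃ ε > (0 : ℝ), ∃ k ℓ : Fin n, k ≠ ℓ ∧
      (∀ t ∈ I ∩ Set.Icc (q - ε) q, P t = P q + (t - q) • eVec n ℓ) ∧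
      (∀ t ∈ I ∩ Set.Icc q (q + ε), P t = P q + (t - q) • eVec n k)))

/-- A non-degenerate `n`-system: an `n`-system whose domain is a closed subinterval
of `(0,∞)` and whose switch points all have `n` distinct positive coordinates. -/
def IsNonDegenerate (n : ℕ) (I : Set ℝ) (P : ℝ → RVec n) : Prop :=
  IsNSystem n I P ∧ IsClosed I ∧ I ⊆ Set.Ioi (0 : ℝ) ∧
  ∀ q, IsSwitchNumber n I P q → (∀ i, 0 < P q i) ∧ StrictMono (P q)

/-- A rigid `n`-system of mesh `δ`: a non-degenerate `n`-system whose switch points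
belong to `δℤ^n`. -/
def IsRigid (n : ℕ) (δ : ℝ) (I : Set ℝ) (P : ℝ → RVec n) : Prop :=
  IsNonDegenerate n I P ∧
  ∀ q, IsSwitchNumber n I P q → ∀ i, ∃ m : ℤ, P q i = δ * m

/-- A self-similar system: the domain is unbounded and there is `ρ > 1` with
`P(ρq) = ρ • P(q)` for all `q` in the domain. -/
def IsSelfSimilar (n : ℕ) (I : Set ℝ) (P : ℝ → RVec n) : Prop :=
  ¬ BddAbove I ∧ ∃ ρ : ℝ, 1 < ρ ∧ ∀ q ∈ I, ρ * q ∈ I ∧ P (ρ * q) = ρ • P q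

/-- The cube `[-ε, ε]^n`. -/
def cubeNbhd (n : ℕ) (ε : ℝ) : Set (RVec n) := {y | ∀ i, |y i| ≤ ε}

/-- The distance `dist(E, F)`: the infimum of all `ε > 0` such that
`E ⊆ F + [-ε,ε]^n` and `F ⊆ E + [-ε,ε]^n`. -/
def cubeDist (n : ℕ) (E F : Set (RVec n)) : ℝ :=
  sInf {ε : ℝ | 0 < ε ∧ E ⊆ F + cubeNbhd n ε ∧ F ⊆ E + cubeNbhd n ε}

/-- `μ_T(P)`: the point of `ℝ^m` whose `j`-th coordinate is
`liminf_{q → ∞, q ∈ I} T_j(P(q))/q`. -/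
def muT (n m : ℕ) (T : RVec n → RVec m) (I : Set ℝ) (P : ℝ → RVec n) : RVec m :=
  fun j => Filter.liminf (fun q => T (P q) j / q) (atTop ⊓ 𝓟 I)

/-- `liminf` of a sequence of subsets of `ℝ^n`: the set of limits of convergent
sequences `(x_i)` with `x_i ∈ F i` for every `i`. -/
def setLiminf (n : ℕ) (F : ℕ → Set (RVec n)) : Set (RVec n) :=
  {x | ∃ y : ℕ → RVec n, (∀ i, y i ∈ F i) ∧ Tendsto y atTop (𝓝 x)}

/-- `limsup` of a sequence of subsets of `ℝ^n`: the set of accumulation points of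
sequences `(x_i)` with `x_i ∈ F i` for every `i`, i.e. limits of convergent
subsequences. -/
def setLimsup (n : ℕ) (F : ℕ → Set (RVec n)) : Set (RVec n) :=
  {x | ∃ (y : ℕ → RVec n) (φ : ℕ → ℕ), (∀ i, y i ∈ F i) ∧ StrictMono φ ∧
    Tendsto (y ∘ φ) atTop (𝓝 x)}
/-- The embedding `ι : ℝ^{n-1} → ℝ^n`, `ι(x₂, …, x_n) = (0, x₂, …, x_n)`. -/
def iotaEmb (n : ℕ) (x : RVec (n - 1)) : RVec n :=
  fun i => if h : (i : ℕ) = 0 then 0 else x ⟨(i : ℕ) - 1, by omega⟩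

namespace PMuAux

lemma ray_subset {I : Set ℝ} (hI : I.OrdConnected) (hub : ¬BddAbove I) {t : ℝ}
    (ht : t ∈ I) : Set.Ici t ⊆ I := by
  intro x hx
  obtain ⟨b, hb, hxb⟩ : ∃ b ∈ I, x ≤ b := by
    by_contra h
    push_neg at h
    exact hub ⟨x, fun y hy => (h y hy).le⟩
  exact hI.out ht hb ⟨hx, hxb⟩

lemma exists_ge_of_not_bddAbove {I : Set ℝ} (hub : ¬BddAbove I) (x : ℝ) :
    ∃ t ∈ I, x ≤ t := by
  by_contra h
  push_neg at h
  exact hub ⟨x, fun y hy => (h y hy).le⟩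

lemma monoOn_of_local {I : Set ℝ} (hI : I.OrdConnected) {f : ℝ → ℝ}
    (h : ∀ q ∈ I, ∃ ε > (0:ℝ), (∀ t ∈ I ∩ Icc (q-ε) q, f t ≤ f q) ∧
      (∀ t ∈ I ∩ Icc q (q+ε), f q ≤ f t)) :
    MonotoneOn f I := by
  intro a ha b hb hab
  rcases eq_or_lt_of_le hab with rfl | hab
  · exact le_rfl
  have hsub : Icc a b ⊆ I := hI.out ha hb
  set S : Set ℝ := {x | x ∈ Icc a b ∧ ∀ y ∈ Icc a x, f a ≤ f y} with hS
  have haS : a ∈ S := ⟨⟨le_rfl, hab.le⟩, fun y hy => by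
    have : y = a := le_antisymm hy.2 hy.1
    simp [this]⟩
  have hSbdd : BddAbove S := ⟨b, fun x hx => hx.1.2⟩
  have hSne : S.Nonempty := ⟨a, haS⟩
  set c := sSup S with hc
  have hac : a ≤ c := le_csSup hSbdd haS
  have hcb : c ≤ b := csSup_le hSne fun x hx => hx.1.2
  have hcI : c ∈ I := hsub ⟨hac, hcb⟩
  have hfc : f a ≤ f c := by
    rcases eq_or_lt_of_le hac with hac' | hay
    · rw [← hac']
    · obtain ⟨ε, hε, hl, _⟩ := h c hcI
      obtain ⟨x, hxS, hx⟩ := exists_lt_of_lt_csSup hSne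
        (show max a (c - ε) < c from max_lt hay (by linarith))
      have hxc : x ≤ c := le_csSup hSbdd hxS
      have h1 : f a ≤ f x := hxS.2 x ⟨hxS.1.1, le_rfl⟩
      have h2 : f x ≤ f c := hl x ⟨hsub hxS.1, ⟨(le_max_right _ _).trans hx.le, hxc⟩⟩
      exact h1.trans h2
  have hcS : c ∈ S := by
    refine ⟨⟨hac, hcb⟩, fun y hy => ?_⟩
    rcases lt_or_eq_of_le hy.2 with hyc | hyc
    · obtain ⟨x, hxS, hyx⟩ := exists_lt_of_lt_csSup hSne hyc
      exact hxS.2 y ⟨hy.1, hyx.le⟩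
    · rw [hyc]; exact hfc
  have hcb' : c = b := by
    by_contra hne
    have hclt : c < b := lt_of_le_of_ne hcb hne
    obtain ⟨ε, hε, _, hr⟩ := h c hcI
    set d := min b (c + ε) with hd
    have hcd : c < d := lt_min hclt (by linarith)
    have hdS : d ∈ S := by
      refine ⟨⟨hac.trans hcd.le, min_le_left _ _⟩, fun y hy => ?_⟩
      by_cases hyc : y ≤ c
      · exact hcS.2 y ⟨hy.1, hyc⟩
      · have hcy : c ≤ y := (not_le.mp hyc).le
        have hyI : y ∈ I := hsub ⟨hy.1, hy.2.trans (min_le_left _ _)⟩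
        exact hfc.trans (hr y ⟨hyI, ⟨hcy, hy.2.trans (min_le_right _ _)⟩⟩)
    have : d ≤ c := le_csSup hSbdd hdS
    linarith
  exact hcb' ▸ hfc

lemma ivp_of_local {I : Set ℝ} (hI : I.OrdConnected) {f : ℝ → ℝ}
    (h : ∀ q ∈ I, ∃ ε > (0:ℝ),
      (∃ d, 0 ≤ d ∧ d ≤ 1 ∧ ∀ t ∈ I ∩ Icc (q-ε) q, f t = f q + (t-q)*d) ∧
      (∃ d, 0 ≤ d ∧ d ≤ 1 ∧ ∀ t ∈ I ∩ Icc q (q+ε), f t = f q + (t-q)*d))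
    {a b y : ℝ} (ha : a ∈ I) (hb : b ∈ I) (hab : a ≤ b)
    (h1 : f a ≤ y) (h2 : y ≤ f b) : ∃ t ∈ Icc a b, f t = y := by
  have hsub : Icc a b ⊆ I := hI.out ha hb
  set S : Set ℝ := {x | x ∈ Icc a b ∧ f x ≤ y} with hS
  have haS : a ∈ S := ⟨⟨le_rfl, hab⟩, h1⟩
  have hSbdd : BddAbove S := ⟨b, fun x hx => hx.1.2⟩
  have hSne : S.Nonempty := ⟨a, haS⟩
  set c := sSup S with hc
  have hac : a ≤ c := le_csSup hSbdd haS
  have hcb : c ≤ b := csSup_le hSne fun x hx => hx.1.2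
  have hcI : c ∈ I := hsub ⟨hac, hcb⟩
  obtain ⟨ε, hε, ⟨dl, hdl0, hdl1, hl⟩, ⟨dr, hdr0, hdr1, hr⟩⟩ := h c hcI
  have hfcy : f c ≤ y := by
    by_contra hcy
    push_neg at hcy
    -- every element of S is ≤ c; find one close to c
    have hca : a ≠ c := by
      intro hca'; rw [← hca'] at hcy; exact absurd h1 (not_le.mpr hcy)
    have hay : a < c := lt_of_le_of_ne hac hca
    set δ := min ε ((f c - y)/2) with hδ
    have hδ0 : 0 < δ := lt_min hε (by linarith)
    obtain ⟨x, hxS, hx⟩ := exists_lt_of_lt_csSup hSne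
      (show max a (c - δ) < c from max_lt hay (by linarith))
    have hxc : x ≤ c := le_csSup hSbdd hxS
    have hxI : x ∈ I := hsub hxS.1
    have hxlo : c - δ ≤ x := (le_max_right _ _).trans hx.le
    have hδε : δ ≤ ε := min_le_left _ _
    have := hl x ⟨hxI, ⟨by linarith, hxc⟩⟩
    -- f x = f c + (x - c) * dl, f x ≤ y, so f c ≤ y + (c-x) ≤ y + δ < f c
    have hm : (c - x) * dl ≤ δ := by
      calc (c - x) * dl ≤ (c - x) * 1 :=
            mul_le_mul_of_nonneg_left hdl1 (by linarith)
      _ ≤ δ := by linarith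
    have hδle : δ ≤ (f c - y)/2 := min_le_right _ _
    nlinarith [hxS.2]
  rcases eq_or_lt_of_le hfcy with heq | hlt
  · exact ⟨c, ⟨hac, hcb⟩, heq⟩
  · exfalso
    have hcneb : c ≠ b := by
      intro h'; rw [h'] at hlt; exact absurd h2 (not_le.mpr hlt)
    have hclt : c < b := lt_of_le_of_ne hcb hcneb
    set d := min b (min (c + ε) (c + (y - f c))) with hd
    have hcd : c < d := by
      refine lt_min hclt (lt_min (by linarith) (by linarith))
    have hdI : d ∈ I := hsub ⟨hac.trans hcd.le, min_le_left _ _⟩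
    have hdc : d - c ≤ ε := by
      have : d ≤ c + ε := (min_le_right _ _).trans (min_le_left _ _)
      linarith
    have hdy : d - c ≤ y - f c := by
      have : d ≤ c + (y - f c) := (min_le_right _ _).trans (min_le_right _ _)
      linarith
    have := hr d ⟨hdI, ⟨hcd.le, by linarith⟩⟩
    have hfd : f d ≤ y := by nlinarith
    have : d ≤ c := le_csSup hSbdd ⟨⟨hac.trans hcd.le, min_le_left _ _⟩, hfd⟩
    linarith

lemma liminf_eq_of_tendsto_sub {F : Filter ℝ} [F.NeBot] {f g : ℝ → ℝ} {C : ℝ}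
    (hfb : ∀ᶠ t in F, |f t| ≤ C)
    (hgf : Tendsto (fun t => g t - f t) F (nhds 0)) :
    Filter.liminf g F = Filter.liminf f F := by
  have hgb : ∀ᶠ t in F, |g t| ≤ C + 1 := by
    have h1 : ∀ᶠ t in F, |g t - f t| ≤ 1 := by
      have := hgf (Metric.closedBall_mem_nhds (0:ℝ) one_pos)
      filter_upwards [this] with t ht
      simpa [Real.dist_eq] using ht
    filter_upwards [hfb, h1] with t h1 h2
    calc |g t| = |g t - f t + f t| := by ring_nf
    _ ≤ |g t - f t| + |f t| := abs_add_le _ _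
    _ ≤ C + 1 := by linarith
  have key : ∀ (u v : ℝ → ℝ) (Cu Cv : ℝ), (∀ᶠ t in F, |u t| ≤ Cu) → (∀ᶠ t in F, |v t| ≤ Cv) →
      Tendsto (fun t => u t - v t) F (nhds 0) → Filter.liminf u F ≤ Filter.liminf v F := by
    intro u v Cu Cv hu hv huv
    have hεs : ∀ ε : ℝ, 0 < ε → Filter.liminf u F ≤ Filter.liminf v F + ε := by
      intro ε hε
      have hle : ∀ᶠ t in F, u t ≤ v t + ε := by
        have := huv (Metric.closedBall_mem_nhds (0:ℝ) hε)
        filter_upwards [this] with t ht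
        have : |u t - v t| ≤ ε := by simpa [Real.dist_eq] using ht
        have := abs_le.mp this
        linarith [this.2]
      have hbd1 : F.IsBoundedUnder (· ≥ ·) u := ⟨-Cu, eventually_map.mpr (by
        filter_upwards [hu] with t ht
        linarith [(abs_le.mp ht).1])⟩
      have hbd2 : F.IsBoundedUnder (· ≤ ·) (fun t => v t + ε) := ⟨Cv + ε, eventually_map.mpr (by
        filter_upwards [hv] with t ht
        linarith [(abs_le.mp ht).2])⟩
      have hbd3 : F.IsBoundedUnder (· ≥ ·) v := ⟨-Cv, eventually_map.mpr (by
        filter_upwards [hv] with t ht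
        linarith [(abs_le.mp ht).1])⟩
      have hbd4 : F.IsBoundedUnder (· ≤ ·) v := ⟨Cv, eventually_map.mpr (by
        filter_upwards [hv] with t ht
        linarith [(abs_le.mp ht).2])⟩
      calc Filter.liminf u F ≤ Filter.liminf (fun t => v t + ε) F :=
            Filter.liminf_le_liminf hle hbd1 hbd2.isCoboundedUnder_ge
      _ = Filter.liminf v F + ε :=
            _root_.liminf_add_const F v ε hbd4.isCoboundedUnder_ge hbd3
    by_contra hcon
    push_neg at hcon
    have := hεs ((Filter.liminf u F - Filter.liminf v F)/2) (by linarith)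
    linarith
  refine le_antisymm (key g f (C+1) C hgb hfb hgf) (key f g C (C+1) hfb hgb ?_)
  have : (fun t => f t - g t) = (fun t => -(g t - f t)) := by funext t; ring
  rw [this]
  simpa using hgf.neg

lemma eVec_mem01 (n j : ℕ) (i : Fin n) : eVec n j i = 0 ∨ eVec n j i = 1 := by
  unfold eVec; split <;> simp

lemma eVec_nonneg (n j : ℕ) (i : Fin n) : 0 ≤ eVec n j i := by
  rcases eVec_mem01 n j i with h | h <;> rw [h] <;> norm_num

lemma eVec_le_one (n j : ℕ) (i : Fin n) : eVec n j i ≤ 1 := by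
  rcases eVec_mem01 n j i with h | h <;> rw [h] <;> norm_num

lemma eVec_apply_eq_zero {n j : ℕ} {i : Fin n} (h : (i : ℕ) ≠ j) : eVec n j i = 0 := by
  unfold eVec; simp [h]

lemma eVec_apply_eq_one {n j : ℕ} {i : Fin n} (h : (i : ℕ) = j) : eVec n j i = 1 := by
  unfold eVec; simp [h]

lemma reduce {n : ℕ} {I : Set ℝ} {P : ℝ → RVec (n+1)}
    (hP : IsNSystem (n+1) I P) (hub : ¬BddAbove I) {M : ℝ}
    (hM : ∀ q ∈ I, P q 0 ≤ M) :
    ∃ I' R, IsNSystem n I' R ∧ ¬BddAbove I' ∧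
      ∀ (m : ℕ) (T : RVec (n+1) → RVec m), IsLinearMap ℝ T →
        muT n m (fun x => T (iotaEmb (n+1) x)) I' R = muT (n+1) m T I P := by
  obtain ⟨hI0, hIoc, hIint, hSys⟩ := hP
  have hIne : I.Nonempty := ⟨_, interior_subset hIint.some_mem⟩
  obtain ⟨φ, hφa⟩ : ∃ φ : ℝ → ℝ, ∀ t, φ t = t - P t 0 := ⟨_, fun _ => rfl⟩
  have hray : ∀ {t}, t ∈ I → Ici t ⊆ I := fun ht => ray_subset hIoc hub ht
  have hge : ∀ x, ∃ t ∈ I, x ≤ t := exists_ge_of_not_bddAbove hub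
  have hS1 : ∀ q ∈ I, (∀ i, 0 ≤ P q i) ∧ Monotone (P q) ∧ (∑ i, P q i) = q :=
    fun q hq => (hSys q hq).1
  have hS2 : ∀ q ∈ I, ∃ ε > (0:ℝ), ∃ k ℓ : Fin (n+1),
      (∀ t ∈ I ∩ Set.Icc (q - ε) q, P t = P q + (t - q) • eVec (n+1) ℓ) ∧
      (∀ t ∈ I ∩ Set.Icc q (q + ε), P t = P q + (t - q) • eVec (n+1) k) ∧
      (q ∈ interior I → ℓ < k → ∀ i : Fin (n+1), ℓ ≤ i → i ≤ k → P q i = P q ℓ) :=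
    fun q hq => (hSys q hq).2
  have hφsum : ∀ q ∈ I, φ q = ∑ i : Fin n, P q i.succ := by
    intro q hq
    have h := (hS1 q hq).2.2
    rw [Fin.sum_univ_succ] at h
    rw [hφa]
    linarith
  have hφ0 : ∀ q ∈ I, 0 ≤ φ q := by
    intro q hq
    rw [hφsum q hq]
    exact Finset.sum_nonneg fun i _ => (hS1 q hq).1 _
  have hM0 : 0 ≤ M := by
    obtain ⟨t, ht⟩ := hIne
    exact le_trans ((hS1 t ht).1 0) (hM t ht)
  have hcoord : ∀ i : Fin (n+1), MonotoneOn (fun t => P t i) I := by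
    intro i
    apply monoOn_of_local hIoc
    intro q hq
    obtain ⟨ε, hε, k, ℓ, hl, hr, _⟩ := hS2 q hq
    refine ⟨ε, hε, fun t ht => ?_, fun t ht => ?_⟩
    · have h := congrFun (hl t ht) i
      simp only [Pi.add_apply, Pi.smul_apply, smul_eq_mul] at h
      rcases eVec_mem01 (n+1) (ℓ:ℕ) i with he | he <;> rw [he] at h <;>
        [linarith; linarith [ht.2.2]]
    · have h := congrFun (hr t ht) i
      simp only [Pi.add_apply, Pi.smul_apply, smul_eq_mul] at h
      rcases eVec_mem01 (n+1) (k:ℕ) i with he | he <;> rw [he] at h <;>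
        [linarith; linarith [ht.2.1]]
  have hφmono : MonotoneOn φ I := by
    intro a ha b hb hab
    rw [hφsum a ha, hφsum b hb]
    exact Finset.sum_le_sum fun i _ => hcoord i.succ ha hb hab
  -- local structure of φ: on the left/right of q it is affine with slope 0 or 1
  have hφloc : ∀ q ∈ I, ∃ ε > (0:ℝ),
      (∃ d, 0 ≤ d ∧ d ≤ 1 ∧ ∀ t ∈ I ∩ Icc (q-ε) q, φ t = φ q + (t-q)*d) ∧
      (∃ d, 0 ≤ d ∧ d ≤ 1 ∧ ∀ t ∈ I ∩ Icc q (q+ε), φ t = φ q + (t-q)*d) := by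
    intro q hq
    obtain ⟨ε, hε, k, ℓ, hl, hr, _⟩ := hS2 q hq
    refine ⟨ε, hε,
      ⟨1 - eVec (n+1) (ℓ:ℕ) 0, by linarith [eVec_le_one (n+1) (ℓ:ℕ) 0],
        by linarith [eVec_nonneg (n+1) (ℓ:ℕ) 0], fun t ht => ?_⟩,
      ⟨1 - eVec (n+1) (k:ℕ) 0, by linarith [eVec_le_one (n+1) (k:ℕ) 0],
        by linarith [eVec_nonneg (n+1) (k:ℕ) 0], fun t ht => ?_⟩⟩
    · have h := congrFun (hl t ht) 0
      simp only [Pi.add_apply, Pi.smul_apply, smul_eq_mul] at h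
      rw [hφa, hφa, h]; ring
    · have h := congrFun (hr t ht) 0
      simp only [Pi.add_apply, Pi.smul_apply, smul_eq_mul] at h
      rw [hφa, hφa, h]; ring
  have hivp : ∀ a ∈ I, ∀ b ∈ I, a ≤ b → ∀ y, φ a ≤ y → y ≤ φ b →
      ∃ t ∈ Icc a b, φ t = y :=
    fun a ha b hb hab y h1 h2 => ivp_of_local hIoc hφloc ha hb hab h1 h2
  have htail : ∀ t ∈ I, ∀ t' ∈ I, t ≤ t' → φ t = φ t' →
      ∀ i : Fin n, P t i.succ = P t' i.succ := by
    intro t ht t' ht' htt hφe i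
    have hsum : ∑ j : Fin n, (P t' j.succ - P t j.succ) = 0 := by
      rw [Finset.sum_sub_distrib, ← hφsum t ht, ← hφsum t' ht', hφe]; ring
    have hnn : ∀ j ∈ Finset.univ, (0:ℝ) ≤ P t' (Fin.succ j) - P t (Fin.succ j) :=
      fun j _ => sub_nonneg.mpr (hcoord j.succ ht ht' htt)
    have h := (Finset.sum_eq_zero_iff_of_nonneg hnn).mp hsum i (Finset.mem_univ _)
    linarith
  obtain ⟨I', hI'a⟩ : ∃ I' : Set ℝ, I' = φ '' I := ⟨_, rfl⟩
  obtain ⟨σ, hσa⟩ : ∃ σ : ℝ → ℝ, ∀ q, σ q = sSup {t | t ∈ I ∧ φ t = q} :=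
    ⟨_, fun _ => rfl⟩
  obtain ⟨R, hRa⟩ : ∃ R : ℝ → RVec n, ∀ q i, R q i = P (σ q) i.succ :=
    ⟨_, fun _ _ => rfl⟩
  have hfib : ∀ q ∈ I', σ q ∈ I ∧ φ (σ q) = q ∧ ∀ t ∈ I, φ t = q → t ≤ σ q := by
    intro q hq
    rw [hI'a] at hq
    obtain ⟨t₀, ht₀, hq0⟩ := hq
    have hne : {t | t ∈ I ∧ φ t = q}.Nonempty := ⟨t₀, ht₀, hq0⟩
    have hbdd : BddAbove {t | t ∈ I ∧ φ t = q} := by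
      refine ⟨q + M, fun t ht => ?_⟩
      have h1 : P t 0 ≤ M := hM t ht.1
      have h2 : φ t = q := ht.2
      rw [hφa] at h2
      linarith
    have hub2 : ∀ t ∈ I, φ t = q → t ≤ σ q := by
      intro t ht he
      rw [hσa]
      exact le_csSup hbdd ⟨ht, he⟩
    have hτI : σ q ∈ I := hray ht₀ (hub2 t₀ ht₀ hq0)
    have hql : q ≤ φ (σ q) := by
      calc q = φ t₀ := hq0.symm
      _ ≤ φ (σ q) := hφmono ht₀ hτI (hub2 t₀ ht₀ hq0)
    refine ⟨hτI, le_antisymm ?_ hql, hub2⟩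
    by_contra hgt
    push_neg at hgt
    obtain ⟨ε, hε, k, ℓ, hl, hr, _⟩ := hS2 (σ q) hτI
    have hδ0 : 0 < min ε ((φ (σ q) - q)/2) := lt_min hε (by linarith)
    obtain ⟨x, hxF, hx⟩ := exists_lt_of_lt_csSup hne
      (show σ q - min ε ((φ (σ q) - q)/2) < sSup {t | t ∈ I ∧ φ t = q} by
        rw [← hσa]; linarith)

    have hxσ : x ≤ σ q := hub2 x hxF.1 hxF.2
    have hd1 : min ε ((φ (σ q) - q)/2) ≤ ε := min_le_left _ _
    have hd2 : min ε ((φ (σ q) - q)/2) ≤ (φ (σ q) - q)/2 := min_le_right _ _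
    have h := congrFun (hl x ⟨hxF.1, ⟨by linarith, hxσ⟩⟩) 0
    simp only [Pi.add_apply, Pi.smul_apply, smul_eq_mul] at h
    have hφx : φ x = q := hxF.2
    have e1 : φ x = x - P x 0 := hφa x
    have e2 : φ (σ q) = σ q - P (σ q) 0 := hφa (σ q)
    rcases eVec_mem01 (n+1) (ℓ:ℕ) 0 with he | he <;> rw [he] at h <;> linarith
  have hRval : ∀ q, ∀ t ∈ I, φ t = q → ∀ i : Fin n, R q i = P t i.succ := by
    intro q t ht he i
    have hq' : q ∈ I' := by rw [hI'a]; exact ⟨t, ht, he⟩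
    obtain ⟨hτI, hφτ, hub'⟩ := hfib q hq'
    rw [hRa]
    exact (htail t ht (σ q) hτI (hub' t ht he) (he.trans hφτ.symm) i).symm
  -- rays inside I'
  have hIci' : ∀ q ∈ I', Ici q ⊆ I' := by
    intro q hq s hs
    obtain ⟨hτI, hφτ, _⟩ := hfib q hq
    obtain ⟨t₁, ht₁I, ht₁⟩ := hge (max (σ q) (s + M))
    have hτt₁ : σ q ≤ t₁ := le_trans (le_max_left _ _) ht₁
    have hst₁ : s + M ≤ t₁ := le_trans (le_max_right _ _) ht₁
    have hφt₁ : s ≤ φ t₁ := by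
      have h1 := hM t₁ ht₁I
      rw [hφa]; linarith
    obtain ⟨t, htm, hte⟩ := hivp (σ q) hτI t₁ ht₁I hτt₁ s (by rw [hφτ]; exact hs) hφt₁
    rw [hI'a]
    exact ⟨t, hray hτI htm.1, hte⟩
  obtain ⟨q₀, hq₀⟩ : I'.Nonempty := by
    obtain ⟨t, ht⟩ := hIne
    exact ⟨φ t, by rw [hI'a]; exact ⟨t, ht, rfl⟩⟩
  have hub' : ¬BddAbove I' := by
    rintro ⟨u, hu⟩
    have h1 : u + 1 ∈ I' := hIci' q₀ hq₀ (le_trans (hu hq₀) (by linarith))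
    have h2 := hu h1
    linarith
  have hI'oc : I'.OrdConnected := ⟨fun x hx y _ z hz => hIci' x hx hz.1⟩
  have hI'int : (interior I').Nonempty := by
    refine ⟨q₀ + 1, ?_⟩
    have hsub : Ioi q₀ ⊆ I' := fun x hx => hIci' q₀ hq₀ (mem_Ici.mpr (le_of_lt hx))
    exact interior_maximal hsub isOpen_Ioi (by norm_num : q₀ + 1 ∈ Ioi q₀)
  have hI'0 : I' ⊆ Ici 0 := by
    intro s hs
    obtain ⟨hτI, hφτ, _⟩ := hfib s hs
    exact mem_Ici.mpr (hφτ ▸ hφ0 _ hτI)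
  -- the per-point conditions for R
  have hq's : ∀ q ∈ I',
      ((∀ i, 0 ≤ R q i) ∧ Monotone (R q) ∧ (∑ i, R q i) = q) ∧
      ∃ ε > (0:ℝ), ∃ k ℓ : Fin n,
        (∀ t ∈ I' ∩ Set.Icc (q - ε) q, R t = R q + (t - q) • eVec n ℓ) ∧
        (∀ t ∈ I' ∩ Set.Icc q (q + ε), R t = R q + (t - q) • eVec n k) ∧
        (q ∈ interior I' → ℓ < k → ∀ i : Fin n, ℓ ≤ i → i ≤ k → R q i = R q ℓ) := by
    intro q hq
    obtain ⟨hτI, hφτ, hτub⟩ := hfib q hq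
    constructor
    · refine ⟨fun i => ?_, fun i j hij => ?_, ?_⟩
      · rw [hRa]; exact (hS1 _ hτI).1 _
      · rw [hRa, hRa]
        refine (hS1 _ hτI).2.1 ?_
        rw [Fin.le_def, Fin.val_succ, Fin.val_succ]
        exact Nat.add_le_add_right (Fin.le_def.mp hij) 1
      · have h := (hS1 _ hτI).2.2
        rw [Fin.sum_univ_succ] at h
        have hc : ∑ i : Fin n, R q i = ∑ i : Fin n, P (σ q) i.succ :=
          Finset.sum_congr rfl (fun i _ => hRa q i)
        have e2 := hφa (σ q)
        rw [hc]; linarith [hφτ]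
    -- right package at σ q
    obtain ⟨ε₁, hε₁, k₁, ℓ₁, hl₁, hr₁, hs₁⟩ := hS2 (σ q) hτI
    have hk₁ : (k₁:ℕ) ≠ 0 := by
      intro h0
      have htI : σ q + ε₁ ∈ I := hray hτI (Set.mem_Ici.mpr (by linarith))
      have h := congrFun (hr₁ (σ q + ε₁) ⟨htI, ⟨by linarith, le_rfl⟩⟩) 0
      simp only [Pi.add_apply, Pi.smul_apply, smul_eq_mul] at h
      rw [eVec_apply_eq_one (by rw [Fin.val_zero]; omega)] at h
      have e1 := hφa (σ q + ε₁)
      have e2 := hφa (σ q)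
      have hφt : φ (σ q + ε₁) = q := by linarith [hφτ]
      have := hτub _ htI hφt
      linarith
    have hkklt : (k₁:ℕ) - 1 < n := by have := k₁.isLt; omega
    have hRight : ∀ s ∈ Icc q (q + ε₁),
        R s = R q + (s - q) • eVec n ((k₁:ℕ) - 1) := by
      intro s hs
      have htI : σ q + (s - q) ∈ I := hray hτI (Set.mem_Ici.mpr (by linarith [hs.1]))
      have hmem : σ q + (s - q) ∈ I ∩ Icc (σ q) (σ q + ε₁) :=
        ⟨htI, ⟨by linarith [hs.1], by linarith [hs.2]⟩⟩
      have h0 := congrFun (hr₁ _ hmem) 0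
      simp only [Pi.add_apply, Pi.smul_apply, smul_eq_mul] at h0
      rw [eVec_apply_eq_zero (by rw [Fin.val_zero]; omega)] at h0
      have hφt : φ (σ q + (s - q)) = s := by
        have e2 := hφa (σ q); have e3 := hφa (σ q + (s - q)); linarith [hφτ]
      funext i
      have hv := congrFun (hr₁ _ hmem) i.succ
      simp only [Pi.add_apply, Pi.smul_apply, smul_eq_mul] at hv
      have hR1 : R s i = P (σ q + (s - q)) i.succ := hRval s _ htI hφt i
      have hR2 : R q i = P (σ q) i.succ := hRval q _ hτI hφτ i
      have hee : eVec (n+1) (k₁:ℕ) i.succ = eVec n ((k₁:ℕ)-1) i := by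
        by_cases hc : (i:ℕ) = (k₁:ℕ) - 1
        · rw [eVec_apply_eq_one (by rw [Fin.val_succ]; omega), eVec_apply_eq_one hc]
        · rw [eVec_apply_eq_zero (by rw [Fin.val_succ]; omega), eVec_apply_eq_zero hc]
      simp only [Pi.add_apply, Pi.smul_apply, smul_eq_mul]
      rw [hR1, hR2, hv, hee]
      ring
    by_cases hbel : ∃ s ∈ I', s < q
    · -- there are points of I' below q
      obtain ⟨s₀, hs₀I, hs₀q⟩ := hbel
      have hs₀I2 := hs₀I
      rw [hI'a] at hs₀I2
      obtain ⟨t₀, ht₀I, hφt₀⟩ := hs₀I2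
      have hne : {t | t ∈ I ∧ φ t = q}.Nonempty := ⟨σ q, hτI, hφτ⟩
      have hlb : ∀ t ∈ {t | t ∈ I ∧ φ t = q}, t₀ ≤ t := by
        intro t ht
        by_contra hlt
        push_neg at hlt
        have h1 := hφmono ht.1 ht₀I hlt.le
        rw [ht.2, hφt₀] at h1
        linarith
      have hbb : BddBelow {t | t ∈ I ∧ φ t = q} := ⟨t₀, hlb⟩
      obtain ⟨b, hbdef⟩ : ∃ b : ℝ, b = sInf {t | t ∈ I ∧ φ t = q} := ⟨_, rfl⟩
      have hbt₀ : t₀ ≤ b := hbdef ▸ le_csInf hne hlb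
      have hbI : b ∈ I := hray ht₀I hbt₀
      have hbmin : ∀ t ∈ I, φ t = q → b ≤ t := fun t ht he =>
        hbdef ▸ csInf_le hbb ⟨ht, he⟩
      have hbτ : b ≤ σ q := hbmin _ hτI hφτ
      obtain ⟨ε₂, hε₂, k₂, ℓ₂, hl₂, hr₂, hs₂⟩ := hS2 b hbI
      have hφb : φ b = q := by
        have hle : φ b ≤ q := by
          have h1 := hφmono hbI hτI hbτ; rw [hφτ] at h1; exact h1
        rcases eq_or_lt_of_le hle with h | hlt'
        · exact h
        · exfalso
          have hδ0 : 0 < min ε₂ ((q - φ b)/2) := lt_min hε₂ (by linarith)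
          obtain ⟨x, hxF, hx⟩ := exists_lt_of_csInf_lt hne
            (show sInf {t | t ∈ I ∧ φ t = q} < b + min ε₂ ((q - φ b)/2) by
              rw [← hbdef]; linarith)
          have hbx : b ≤ x := hbmin x hxF.1 hxF.2
          have h := congrFun (hr₂ x ⟨hxF.1,
            ⟨hbx, by linarith [min_le_left ε₂ ((q - φ b)/2)]⟩⟩) 0
          simp only [Pi.add_apply, Pi.smul_apply, smul_eq_mul] at h
          have e1 : φ x = x - P x 0 := hφa x
          have e2 : φ b = b - P b 0 := hφa b
          have hd2 : min ε₂ ((q - φ b)/2) ≤ (q - φ b)/2 := min_le_right _ _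
          rcases eVec_mem01 (n+1) (k₂:ℕ) 0 with he | he <;> rw [he] at h <;>
            linarith [hxF.2]
      have ht₀b : t₀ < b := by
        rcases eq_or_lt_of_le hbt₀ with h | h
        · exfalso; rw [← h] at hφb; rw [hφt₀] at hφb; linarith
        · exact h
      have hℓ₂ : (ℓ₂:ℕ) ≠ 0 := by
        intro h0
        have hxI : max t₀ (b - ε₂) ∈ I := hray ht₀I (mem_Ici.mpr (le_max_left _ _))
        have hxb : max t₀ (b - ε₂) < b := max_lt ht₀b (by linarith)
        have h := congrFun (hl₂ _ ⟨hxI, ⟨le_max_right _ _, hxb.le⟩⟩) 0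
        simp only [Pi.add_apply, Pi.smul_apply, smul_eq_mul] at h
        rw [eVec_apply_eq_one (by rw [Fin.val_zero]; omega)] at h
        have e1 := hφa (max t₀ (b - ε₂))
        have e2 := hφa b
        have hfx : φ (max t₀ (b - ε₂)) = q := by linarith [hφb]
        have := hbmin _ hxI hfx
        linarith
      have hlllt : (ℓ₂:ℕ) - 1 < n := by have := ℓ₂.isLt; omega
      have hLeft : ∀ s ∈ I' ∩ Icc (q - min ε₂ (b - t₀)) q,
          R s = R q + (s - q) • eVec n ((ℓ₂:ℕ) - 1) := by
        intro s hs
        have htI : b + (s - q) ∈ I := hray ht₀I (Set.mem_Ici.mpr (by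
          have h1 : min ε₂ (b - t₀) ≤ b - t₀ := min_le_right _ _
          have h2 := hs.2.1; linarith))
        have hmem : b + (s - q) ∈ I ∩ Icc (b - ε₂) b :=
          ⟨htI, ⟨by linarith [hs.2.1, min_le_left ε₂ (b - t₀)], by linarith [hs.2.2]⟩⟩
        have h0 := congrFun (hl₂ _ hmem) 0
        simp only [Pi.add_apply, Pi.smul_apply, smul_eq_mul] at h0
        rw [eVec_apply_eq_zero (by rw [Fin.val_zero]; omega)] at h0
        have hφt : φ (b + (s - q)) = s := by
          have e2 := hφa b; have e3 := hφa (b + (s - q)); linarith [hφb]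
        funext i
        have hv := congrFun (hl₂ _ hmem) i.succ
        simp only [Pi.add_apply, Pi.smul_apply, smul_eq_mul] at hv
        have hR1 : R s i = P (b + (s - q)) i.succ := hRval s _ htI hφt i
        have hR2 : R q i = P b i.succ := hRval q b hbI hφb i
        have hee : eVec (n+1) (ℓ₂:ℕ) i.succ = eVec n ((ℓ₂:ℕ)-1) i := by
          by_cases hc : (i:ℕ) = (ℓ₂:ℕ) - 1
          · rw [eVec_apply_eq_one (by rw [Fin.val_succ]; omega), eVec_apply_eq_one hc]
          · rw [eVec_apply_eq_zero (by rw [Fin.val_succ]; omega), eVec_apply_eq_zero hc]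
        simp only [Pi.add_apply, Pi.smul_apply, smul_eq_mul]
        rw [hR1, hR2, hv, hee]
        ring
      have hIoi : Ioi t₀ ⊆ interior I :=
        interior_maximal (fun x hx => hray ht₀I (mem_Ici.mpr hx.le)) isOpen_Ioi
      refine ⟨min (min ε₂ (b - t₀)) ε₁, lt_min (lt_min hε₂ (by linarith)) hε₁,
        ⟨(k₁:ℕ)-1, hkklt⟩, ⟨(ℓ₂:ℕ)-1, hlllt⟩, ?_, ?_, ?_⟩
      · intro t ht
        exact hLeft t ⟨ht.1,
          ⟨by linarith [ht.2.1, min_le_left (min ε₂ (b - t₀)) ε₁], ht.2.2⟩⟩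
      · intro t ht
        exact hRight t ⟨ht.2.1, by linarith [ht.2.2, min_le_right (min ε₂ (b - t₀)) ε₁]⟩
      · -- S3
        intro _ hlt i hli hik
        have hlt' : (ℓ₂:ℕ) - 1 < (k₁:ℕ) - 1 := Fin.lt_def.mp hlt
        have hli' : (ℓ₂:ℕ) - 1 ≤ (i:ℕ) := Fin.le_def.mp hli
        have hik' : (i:ℕ) ≤ (k₁:ℕ) - 1 := Fin.le_def.mp hik
        have hτint : σ q ∈ interior I := hIoi (lt_of_lt_of_le ht₀b hbτ)
        have hgoal1 : R q i = P (σ q) i.succ := hRval q _ hτI hφτ i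
        have hgoal2 : R q ⟨(ℓ₂:ℕ)-1, hlllt⟩ = P (σ q) (Fin.succ ⟨(ℓ₂:ℕ)-1, hlllt⟩) :=
          hRval q _ hτI hφτ _
        rw [hgoal1, hgoal2]
        rcases eq_or_lt_of_le hbτ with hbc | hbc
        · -- b = σ q : use the package at b
          have hkk : (k₁:ℕ) = (k₂:ℕ) := by
            have hxI : b + min ε₁ ε₂ ∈ I := hray hbI (Set.mem_Ici.mpr (by
              have := lt_min hε₁ hε₂; linarith))
            have hA := congrFun (hr₂ _ ⟨hxI, ⟨by have := lt_min hε₁ hε₂; linarith,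
              by linarith [min_le_right ε₁ ε₂]⟩⟩) k₁
            have hB := congrFun (hr₁ _ ⟨hxI, ⟨by rw [← hbc]; have := lt_min hε₁ hε₂; linarith,
              by rw [← hbc]; linarith [min_le_left ε₁ ε₂]⟩⟩) k₁
            rw [← hbc] at hB
            simp only [Pi.add_apply, Pi.smul_apply, smul_eq_mul] at hA hB
            rw [eVec_apply_eq_one (i := k₁) (j := (k₁:ℕ)) rfl] at hB
            have hmin0 : 0 < min ε₁ ε₂ := lt_min hε₁ hε₂
            by_contra hne'
            rw [eVec_apply_eq_zero (i := k₁) (j := (k₂:ℕ)) hne'] at hA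
            rw [hA] at hB
            nlinarith
          have hbint : b ∈ interior I := hIoi ht₀b
          have hs₂' := hs₂ hbint (by rw [Fin.lt_def]; omega)
          have hv1 : P b (i.succ) = P b ℓ₂ := hs₂' i.succ
            (by rw [Fin.le_def, Fin.val_succ]; omega)
            (by rw [Fin.le_def, Fin.val_succ]; omega)
          have hv2 : P b (Fin.succ ⟨(ℓ₂:ℕ)-1, hlllt⟩) = P b ℓ₂ := hs₂' _
            (by rw [Fin.le_def, Fin.val_succ]; simp; omega)
            (by rw [Fin.le_def, Fin.val_succ]; simp; omega)
          rw [← hbc]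
          rw [hv1, hv2]
        · -- b < σ q : left slope at σ q is e₀
          have hℓ₁0 : (ℓ₁:ℕ) = 0 := by
            by_contra hno
            set x := max b (σ q - ε₁) with hxdef
            have hxI : x ∈ I := hray hbI (mem_Ici.mpr (le_max_left _ _))
            have hxσ : x < σ q := max_lt hbc (by linarith)
            have hxm : x ∈ I ∩ Icc (σ q - ε₁) (σ q) := ⟨hxI, ⟨le_max_right _ _, hxσ.le⟩⟩
            have hφx : φ x = q := by
              have h1 := hφmono hxI hτI hxσ.le
              have h2 := hφmono hbI hxI (le_max_left _ _)
              rw [hφτ] at h1; rw [hφb] at h2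
              linarith
            have h := congrFun (hl₁ x hxm) 0
            simp only [Pi.add_apply, Pi.smul_apply, smul_eq_mul] at h
            rw [eVec_apply_eq_zero (by rw [Fin.val_zero]; omega)] at h
            have e1 := hφa x
            have e2 := hφa (σ q)
            rw [hφτ] at e2
            rw [hφx] at e1
            -- x - P x 0 = q, σ q - P σ q 0 = q, P x 0 = P σ q 0 → x = σ q
            linarith
          have hs₁' := hs₁ hτint (by rw [Fin.lt_def]; omega)
          have hv1 : P (σ q) (i.succ) = P (σ q) ℓ₁ := hs₁' i.succ
            (by rw [Fin.le_def, Fin.val_succ]; omega)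
            (by rw [Fin.le_def, Fin.val_succ]; omega)
          have hv2 : P (σ q) (Fin.succ ⟨(ℓ₂:ℕ)-1, hlllt⟩) = P (σ q) ℓ₁ := hs₁' _
            (by rw [Fin.le_def, Fin.val_succ]; simp; omega)
            (by rw [Fin.le_def, Fin.val_succ]; simp; omega)
          rw [hv1, hv2]
    · -- no point of I' below q
      push_neg at hbel
      refine ⟨ε₁, hε₁, ⟨(k₁:ℕ)-1, hkklt⟩, ⟨(k₁:ℕ)-1, hkklt⟩, ?_, ?_, ?_⟩
      · intro t ht
        have htq : t = q := le_antisymm ht.2.2 (hbel t ht.1)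
        rw [htq]
        simp
      · intro t ht
        exact hRight t ⟨ht.2.1, ht.2.2⟩
      · intro _ hlt
        exact absurd hlt (lt_irrefl _)
  refine ⟨I', R, ⟨hI'0, hI'oc, hI'int, hq's⟩, hub', ?_⟩
  intro m T hT
  haveI hFne : (atTop ⊓ 𝓟 I).NeBot := by
    rw [inf_principal_neBot_iff]
    intro U hU
    obtain ⟨x, hx⟩ := mem_atTop_sets.mp hU
    obtain ⟨t, htI, hxt⟩ := hge x
    exact ⟨t, hx t hxt, htI⟩
  have hmap : Filter.map φ (atTop ⊓ 𝓟 I) = atTop ⊓ 𝓟 I' := by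
    apply le_antisymm
    · refine le_inf ?_ ?_
      · refine Filter.tendsto_atTop.mpr fun b => ?_
        rw [eventually_inf_principal]
        filter_upwards [eventually_ge_atTop (b + M)] with t ht htI
        rw [hφa]
        linarith [hM t htI]
      · rw [Filter.le_principal_iff, Filter.mem_map]
        refine Filter.mem_of_superset (Filter.mem_inf_of_right (Filter.mem_principal_self I)) ?_
        intro t ht
        rw [Set.mem_preimage, hI'a]
        exact ⟨t, ht, rfl⟩
    · intro S hS
      rw [Filter.mem_map, Filter.mem_inf_principal] at hS
      obtain ⟨x₀, hx₀⟩ := mem_atTop_sets.mp hS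
      obtain ⟨t₁, ht₁I, ht₁⟩ := hge x₀
      rw [Filter.mem_inf_principal]
      refine mem_atTop_sets.mpr ⟨φ t₁, fun s hs hsI' => ?_⟩
      obtain ⟨hσI, hσφ, hσub⟩ := hfib s hsI'
      by_cases hc : x₀ ≤ σ s
      · have h1 := hx₀ (σ s) hc hσI
        rwa [Set.mem_preimage, hσφ] at h1
      · push_neg at hc
        have h2 : s ≤ φ t₁ := by
          rw [← hσφ]
          exact hφmono hσI ht₁I (by linarith)
        have h3 : s = φ t₁ := le_antisymm h2 hs
        rw [h3]
        exact hx₀ t₁ ht₁ ht₁I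
  funext j
  obtain ⟨c, hca⟩ : ∃ c : Fin (n+1) → ℝ, ∀ i, c i = T (eVec (n+1) (i:ℕ)) j :=
    ⟨_, fun _ => rfl⟩
  have hdecq : ∀ x : RVec (n+1), T x j = ∑ i : Fin (n+1), x i * c i := by
    intro x
    have hx : x = ∑ i : Fin (n+1), x i • eVec (n+1) (i:ℕ) := by
      funext a
      rw [Finset.sum_apply]
      have hcong : ∀ i ∈ Finset.univ, (x i • eVec (n+1) (i:ℕ)) a
          = if a = i then x i else 0 := by
        intro i _
        by_cases hc : a = i
        · rw [if_pos hc, Pi.smul_apply, smul_eq_mul,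
            eVec_apply_eq_one (by rw [hc]), mul_one]
        · rw [if_neg hc, Pi.smul_apply, smul_eq_mul,
            eVec_apply_eq_zero (fun hv => hc (Fin.ext hv)), mul_zero]
      rw [Finset.sum_congr rfl hcong, Finset.sum_ite_eq]
      simp
    calc T x j = T (∑ i : Fin (n+1), x i • eVec (n+1) (i:ℕ)) j := by rw [← hx]
    _ = (∑ i : Fin (n+1), x i • T (eVec (n+1) (i:ℕ))) j := by
        have hls : (IsLinearMap.mk' T hT) (∑ i : Fin (n+1), x i • eVec (n+1) (i:ℕ))
            = ∑ i : Fin (n+1), x i • (IsLinearMap.mk' T hT) (eVec (n+1) (i:ℕ)) := by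
          rw [map_sum]
          exact Finset.sum_congr rfl fun i _ => by rw [map_smul]
        exact congrFun hls j
    _ = ∑ i : Fin (n+1), x i * c i := by
        rw [Finset.sum_apply]
        exact Finset.sum_congr rfl fun i _ => by
          rw [Pi.smul_apply, smul_eq_mul, hca]
  obtain ⟨C, hCdef⟩ : ∃ C : ℝ, C = ∑ i : Fin (n+1), |c i| := ⟨_, rfl⟩
  have hC0 : 0 ≤ C := hCdef ▸ Finset.sum_nonneg fun i _ => abs_nonneg _
  have hPle : ∀ t ∈ I, ∀ i, P t i ≤ t := by
    intro t ht i
    have h1 := (hS1 t ht).2.2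
    have h2 : P t i ≤ ∑ i', P t i' :=
      Finset.single_le_sum (fun i' _ => (hS1 t ht).1 i') (Finset.mem_univ i)
    linarith
  have hAbound : ∀ t ∈ I, 0 ≤ t → |T (P t) j| ≤ C * t := by
    intro t ht ht0
    rw [hdecq]
    calc |∑ i : Fin (n+1), P t i * c i| ≤ ∑ i : Fin (n+1), |P t i * c i| :=
        Finset.abs_sum_le_sum_abs _ _
    _ ≤ ∑ i : Fin (n+1), t * |c i| := by
        refine Finset.sum_le_sum fun i _ => ?_
        rw [abs_mul, abs_of_nonneg ((hS1 t ht).1 i)]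
        exact mul_le_mul_of_nonneg_right (hPle t ht i) (abs_nonneg _)
    _ = C * t := by rw [← Finset.mul_sum, ← hCdef]; ring
  have hfb : ∀ᶠ t in atTop ⊓ 𝓟 I, |T (P t) j / t| ≤ C := by
    rw [eventually_inf_principal]
    filter_upwards [eventually_ge_atTop 1] with t ht htI
    have h1 : |T (P t) j| ≤ C * t := hAbound t htI (by linarith)
    rw [abs_div, abs_of_pos (by linarith : (0:ℝ) < t), div_le_iff₀ (by linarith)]
    linarith
  have hiotaeq : ∀ t ∈ I,
      T (iotaEmb (n+1) (R (φ t))) j = T (P t) j - P t 0 * c 0 := by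
    intro t ht
    have hv : iotaEmb (n+1) (R (φ t)) = P t - P t 0 • eVec (n+1) 0 := by
      funext i
      simp only [iotaEmb, Pi.sub_apply, Pi.smul_apply, smul_eq_mul]
      by_cases hc : (i:ℕ) = 0
      · rw [dif_pos hc, eVec_apply_eq_one hc]
        have hi0 : i = 0 := Fin.ext (by rw [hc, Fin.val_zero])
        rw [hi0]
        ring
      · rw [dif_neg hc, eVec_apply_eq_zero hc]
        have h1 : R (φ t) ⟨(i:ℕ)-1, by omega⟩ = P t (Fin.succ ⟨(i:ℕ)-1, by omega⟩) :=
          hRval (φ t) t ht rfl _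
        have h2 : Fin.succ (⟨(i:ℕ)-1, by omega⟩ : Fin n) = i := by
          apply Fin.ext
          show (i:ℕ) - 1 + 1 = (i:ℕ)
          omega
        rw [h1, h2]
        ring
    have hca0 : c 0 = T (eVec (n+1) 0) j := by rw [hca 0, Fin.val_zero]
    rw [hv, hT.map_sub, hca0]
    have hsm : T (P t 0 • eVec (n+1) 0) = P t 0 • T (eVec (n+1) 0) := hT.map_smul _ _
    rw [hsm]
    simp only [Pi.sub_apply, Pi.smul_apply, smul_eq_mul]
  obtain ⟨K, hKdef⟩ : ∃ K : ℝ, K = M * (C + |c 0|) := ⟨_, rfl⟩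
  have hK0 : 0 ≤ K := hKdef ▸ mul_nonneg hM0 (by positivity)
  have hsub : Tendsto (fun t => ((fun s => T (iotaEmb (n+1) (R s)) j / s) ∘ φ) t
      - T (P t) j / t) (atTop ⊓ 𝓟 I) (nhds 0) := by
    apply squeeze_zero_norm' (a := fun t => K / (t - M))
    · rw [eventually_inf_principal]
      filter_upwards [eventually_ge_atTop (M + 1)] with t ht htI
      have hu : φ t = t - P t 0 := hφa t
      have hp0 : 0 ≤ P t 0 := (hS1 t htI).1 0
      have hpM : P t 0 ≤ M := hM t htI
      have hupos : 0 < φ t := by rw [hu]; linarith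
      have htpos : 0 < t := by linarith
      have hA : |T (P t) j| ≤ C * t := hAbound t htI htpos.le
      simp only [Function.comp, Real.norm_eq_abs]
      rw [hiotaeq t htI]
      have heq : (T (P t) j - P t 0 * c 0) / φ t - T (P t) j / t
          = (P t 0 * (T (P t) j - c 0 * t)) / (φ t * t) := by
        field_simp
        rw [hu]; ring
      rw [heq, abs_div, abs_mul]
      have h1 : |P t 0| = P t 0 := abs_of_nonneg hp0
      have h2 : |T (P t) j - c 0 * t| ≤ C * t + |c 0| * t := by
        have h3 := abs_add_le (T (P t) j) (-(c 0 * t))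
        rw [abs_neg] at h3
        have h4 : |c 0 * t| = |c 0| * t := by rw [abs_mul, abs_of_pos htpos]
        calc |T (P t) j - c 0 * t| = |T (P t) j + -(c 0 * t)| := by ring_nf
        _ ≤ |T (P t) j| + |c 0 * t| := h3
        _ ≤ C * t + |c 0| * t := by rw [h4]; linarith
      have habsden : |φ t * t| = φ t * t := abs_of_pos (mul_pos hupos htpos)
      rw [habsden, h1]
      have htM : 0 < t - M := by linarith
      have hnum : P t 0 * |T (P t) j - c 0 * t| ≤ K * t := by
        calc P t 0 * |T (P t) j - c 0 * t| ≤ M * (C * t + |c 0| * t) :=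
            mul_le_mul hpM h2 (abs_nonneg _) hM0
        _ = K * t := by rw [hKdef]; ring
      have hden : (t - M) * t ≤ φ t * t :=
        mul_le_mul_of_nonneg_right (by rw [hu]; linarith) htpos.le
      calc P t 0 * |T (P t) j - c 0 * t| / (φ t * t) ≤ K * t / ((t - M) * t) :=
          div_le_div₀ (by positivity) hnum (mul_pos htM htpos) hden
      _ = K / (t - M) := by rw [mul_div_mul_right _ _ (ne_of_gt htpos)]
    · have h1 : Tendsto (fun t : ℝ => t - M) (atTop ⊓ 𝓟 I) atTop := by
        have h2 : Tendsto (fun t : ℝ => t - M) atTop atTop := by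
          simpa [sub_eq_add_neg] using tendsto_atTop_add_const_right atTop (-M) tendsto_id
        exact h2.mono_left inf_le_left
      exact Tendsto.const_div_atTop h1 K
  show muT n m (fun x => T (iotaEmb (n+1) x)) I' R j = muT (n+1) m T I P j
  simp only [muT]
  rw [← hmap, ← Filter.liminf_comp]
  exact liminf_eq_of_tendsto_sub hfb hsub

lemma iota_zero {n : ℕ} (x : RVec n) : iotaEmb (n+1) x 0 = 0 := by
  simp only [iotaEmb]
  rw [dif_pos (by rw [Fin.val_zero])]

lemma iota_succ {n : ℕ} (x : RVec n) (i : Fin n) : iotaEmb (n+1) x i.succ = x i := by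
  simp only [iotaEmb]
  rw [dif_neg (by rw [Fin.val_succ]; omega)]
  congr 1

lemma iota_ne {n : ℕ} (x : RVec n) {i : Fin (n+1)} (h : (i:ℕ) ≠ 0) :
    iotaEmb (n+1) x i = x ⟨(i:ℕ)-1, by omega⟩ := by
  simp only [iotaEmb]
  rw [dif_neg h]

lemma iota_key {n : ℕ} (x : RVec n) (a : ℝ) (w : ℕ) :
    iotaEmb (n+1) (x + a • eVec n w) = iotaEmb (n+1) x + a • eVec (n+1) (w+1) := by
  funext i
  by_cases hc : (i:ℕ) = 0
  · rw [Pi.add_apply, Pi.smul_apply, smul_eq_mul, iotaEmb, iotaEmb]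
    rw [dif_pos hc, dif_pos hc, eVec_apply_eq_zero (by omega)]
    ring
  · rw [Pi.add_apply, Pi.smul_apply, smul_eq_mul, iota_ne _ hc, iota_ne _ hc]
    rw [Pi.add_apply, Pi.smul_apply, smul_eq_mul]
    by_cases hc2 : (i:ℕ) = w + 1
    · rw [eVec_apply_eq_one (show ((⟨(i:ℕ)-1, by omega⟩ : Fin n):ℕ) = w by
        show (i:ℕ) - 1 = w; omega), eVec_apply_eq_one hc2]
    · rw [eVec_apply_eq_zero (show ((⟨(i:ℕ)-1, by omega⟩ : Fin n):ℕ) ≠ w by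
        show ¬((i:ℕ) - 1 = w); omega), eVec_apply_eq_zero hc2]

lemma embed {n : ℕ} {I : Set ℝ} {R : ℝ → RVec n}
    (hR : IsNSystem n I R) : IsNSystem (n+1) I (fun q => iotaEmb (n+1) (R q)) := by
  obtain ⟨hI0, hIoc, hIint, hSys⟩ := hR
  refine ⟨hI0, hIoc, hIint, fun q hq => ?_⟩
  obtain ⟨⟨hnn, hmono, hsum⟩, ε, hε, k, ℓ, hl, hr, hs3⟩ := hSys q hq
  have hnn' : ∀ i : Fin (n+1), 0 ≤ iotaEmb (n+1) (R q) i := by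
    intro i
    by_cases hc : (i:ℕ) = 0
    · rw [iotaEmb, dif_pos hc]
    · rw [iota_ne _ hc]; exact hnn _
  constructor
  · refine ⟨hnn', fun i i' hii => ?_, ?_⟩
    · show iotaEmb (n+1) (R q) i ≤ iotaEmb (n+1) (R q) i'
      by_cases hc : (i:ℕ) = 0
      · have h1 : iotaEmb (n+1) (R q) i = 0 := by rw [iotaEmb, dif_pos hc]
        rw [h1]; exact hnn' i'
      · have hc' : (i':ℕ) ≠ 0 := by have := Fin.le_def.mp hii; omega
        rw [iota_ne _ hc, iota_ne _ hc']
        refine hmono ?_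
        rw [Fin.le_def]
        show (i:ℕ) - 1 ≤ (i':ℕ) - 1
        have := Fin.le_def.mp hii; omega
    · show (∑ i : Fin (n+1), iotaEmb (n+1) (R q) i) = q
      rw [Fin.sum_univ_succ, iota_zero,
        Finset.sum_congr rfl (fun i (_ : i ∈ Finset.univ) => iota_succ (R q) i), hsum]
      ring
  · refine ⟨ε, hε, k.succ, ℓ.succ, fun t ht => ?_, fun t ht => ?_, ?_⟩
    · show iotaEmb (n+1) (R t) = iotaEmb (n+1) (R q) + (t - q) • eVec (n+1) ((ℓ.succ : Fin (n+1)) : ℕ)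
      rw [hl t ht, Fin.val_succ]
      exact iota_key _ _ _
    · show iotaEmb (n+1) (R t) = iotaEmb (n+1) (R q) + (t - q) • eVec (n+1) ((k.succ : Fin (n+1)) : ℕ)
      rw [hr t ht, Fin.val_succ]
      exact iota_key _ _ _
    · intro hqint hlt i hli hik
      have hlk : ℓ < k := by
        rw [Fin.lt_def]
        have h := Fin.lt_def.mp hlt
        rw [Fin.val_succ, Fin.val_succ] at h
        omega
      have hc : (i:ℕ) ≠ 0 := by
        have h := Fin.le_def.mp hli
        rw [Fin.val_succ] at h
        omega
      have h1 : iotaEmb (n+1) (R q) i = R q ⟨(i:ℕ)-1, by omega⟩ := iota_ne _ hc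
      have h2 : iotaEmb (n+1) (R q) ℓ.succ = R q ℓ := iota_succ _ _
      show iotaEmb (n+1) (R q) i = iotaEmb (n+1) (R q) ℓ.succ
      rw [h1, h2]
      refine hs3 hqint hlk ⟨(i:ℕ)-1, by omega⟩ ?_ ?_
      · rw [Fin.le_def]
        show (ℓ:ℕ) ≤ (i:ℕ) - 1
        have h := Fin.le_def.mp hli
        rw [Fin.val_succ] at h
        omega
      · rw [Fin.le_def]
        show (i:ℕ) - 1 ≤ (k:ℕ)
        have h := Fin.le_def.mp hik
        rw [Fin.val_succ] at h
        omega

lemma eFin2 : (fun i : Fin 2 => if (i:ℕ) = 0 then (0:ℝ) else 1) = eVec 2 1 := by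
  funext i
  by_cases hc : (i:ℕ) = 0
  · rw [if_pos hc, eVec_apply_eq_zero (by omega)]
  · rw [if_neg hc, eVec_apply_eq_one (by have := i.isLt; omega)]

lemma neBot_of_unbdd {I : Set ℝ} (hub : ¬BddAbove I) : (atTop ⊓ 𝓟 I).NeBot := by
  rw [inf_principal_neBot_iff]
  intro U hU
  obtain ⟨x, hx⟩ := mem_atTop_sets.mp hU
  obtain ⟨t, htI, hxt⟩ := exists_ge_of_not_bddAbove hub x
  exact ⟨t, hx t hxt, htI⟩

lemma two_sys : IsNSystem 2 (Ici 1) (fun q => q • eVec 2 1) := by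
  refine ⟨fun x hx => mem_Ici.mpr (le_trans zero_le_one (mem_Ici.mp hx)), ordConnected_Ici, ⟨2, ?_⟩, fun q hq => ?_⟩
  · rw [interior_Ici]
    norm_num
  · have hq0 : (0:ℝ) ≤ q := le_trans zero_le_one hq
    constructor
    · refine ⟨fun i => ?_, fun i i' hii => ?_, ?_⟩
      · simp only [Pi.smul_apply, smul_eq_mul]
        exact mul_nonneg hq0 (eVec_nonneg _ _ _)
      · simp only [Pi.smul_apply, smul_eq_mul]
        by_cases hc : (i:ℕ) = 1
        · have hc' : (i':ℕ) = 1 := by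
            have h := Fin.le_def.mp hii; have := i'.isLt; omega
          rw [eVec_apply_eq_one hc, eVec_apply_eq_one hc']
        · rw [eVec_apply_eq_zero hc, mul_zero]
          exact mul_nonneg hq0 (eVec_nonneg _ _ _)
      · rw [Fin.sum_univ_two]
        simp only [Pi.smul_apply, smul_eq_mul]
        rw [eVec_apply_eq_zero (by rw [Fin.val_zero]; omega),
          eVec_apply_eq_one (by rw [Fin.val_one])]
        ring
    · refine ⟨1, one_pos, 1, 1, fun t _ => ?_, fun t _ => ?_,
        fun _ h => absurd h (lt_irrefl _)⟩ <;>
      · funext i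
        simp only [Pi.add_apply, Pi.smul_apply, smul_eq_mul, Fin.val_one]
        ring

lemma two_mu {m : ℕ} (T : RVec 2 → RVec m) (hT : IsLinearMap ℝ T) :
    muT 2 m T (Ici 1) (fun q => q • eVec 2 1)
      = T (fun i => if (i:ℕ) = 0 then 0 else 1) := by
  haveI : (atTop ⊓ 𝓟 (Ici (1:ℝ))).NeBot := neBot_of_unbdd (not_bddAbove_Ici (1:ℝ))
  funext j
  simp only [muT]
  have hev : ∀ᶠ q in atTop ⊓ 𝓟 (Ici (1:ℝ)),
      T ((fun q => q • eVec 2 1) q) j / q = T (eVec 2 1) j := by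
    rw [eventually_inf_principal]
    filter_upwards [eventually_ge_atTop (1:ℝ)] with q hq _
    have h1 : T (q • eVec 2 1) = q • T (eVec 2 1) := hT.map_smul _ _
    show T (q • eVec 2 1) j / q = T (eVec 2 1) j
    rw [h1, Pi.smul_apply, smul_eq_mul, mul_comm,
      mul_div_assoc, div_self (by linarith : q ≠ 0), mul_one]
  rw [Filter.liminf_congr hev, Filter.liminf_const, eFin2]

lemma two_nonproper {I : Set ℝ} {P : ℝ → RVec 2} (hP : IsNSystem 2 I P)
    (hub : ¬BddAbove I) {M : ℝ} (hM : ∀ q ∈ I, P q 0 ≤ M)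
    {m : ℕ} (T : RVec 2 → RVec m) (hT : IsLinearMap ℝ T) :
    muT 2 m T I P = T (fun i => if (i:ℕ) = 0 then 0 else 1) := by
  haveI : (atTop ⊓ 𝓟 I).NeBot := neBot_of_unbdd hub
  funext j
  simp only [muT]
  have hdec : ∀ t ∈ I, T (P t) j = P t 0 * T (eVec 2 0) j + P t 1 * T (eVec 2 1) j := by
    intro t ht
    have hexp : P t = P t 0 • eVec 2 0 + P t 1 • eVec 2 1 := by
      funext i
      simp only [Pi.add_apply, Pi.smul_apply, smul_eq_mul]
      by_cases hc : (i:ℕ) = 0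
      · rw [eVec_apply_eq_one hc, eVec_apply_eq_zero (by omega)]
        have hi : i = 0 := Fin.ext (by rw [hc, Fin.val_zero])
        rw [hi]; ring
      · have hc1 : (i:ℕ) = 1 := by have := i.isLt; omega
        rw [eVec_apply_eq_zero hc, eVec_apply_eq_one hc1]
        have hi : i = 1 := Fin.ext (by rw [hc1, Fin.val_one])
        rw [hi]; ring
    calc T (P t) j = T (P t 0 • eVec 2 0 + P t 1 • eVec 2 1) j := by rw [← hexp]
    _ = (T (P t 0 • eVec 2 0) + T (P t 1 • eVec 2 1)) j := by rw [hT.map_add]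
    _ = P t 0 * T (eVec 2 0) j + P t 1 * T (eVec 2 1) j := by
        rw [Pi.add_apply, hT.map_smul, hT.map_smul, Pi.smul_apply, Pi.smul_apply,
          smul_eq_mul, smul_eq_mul]
  have hsum2 : ∀ t ∈ I, P t 0 + P t 1 = t := by
    intro t ht
    have h := ((hP.2.2.2 t ht).1).2.2
    rw [Fin.sum_univ_two] at h
    exact h
  have hg : Tendsto (fun t => P t 0 / t) (atTop ⊓ 𝓟 I) (nhds 0) := by
    apply squeeze_zero_norm' (a := fun t => M / t)
    · rw [eventually_inf_principal]
      filter_upwards [eventually_ge_atTop (1:ℝ)] with t ht htI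
      rw [Real.norm_eq_abs, abs_div, abs_of_nonneg ((hP.2.2.2 t htI).1.1 0),
        abs_of_pos (by linarith : (0:ℝ) < t)]
      exact (div_le_div_iff_of_pos_right (by linarith : (0:ℝ) < t)).mpr (hM t htI)
    · exact Tendsto.const_div_atTop (tendsto_id.mono_left inf_le_left) M
  have hlim : Tendsto (fun t => T (P t) j / t) (atTop ⊓ 𝓟 I)
      (nhds (T (eVec 2 1) j)) := by
    have hev : (fun t => T (P t) j / t) =ᶠ[atTop ⊓ 𝓟 I]
        (fun t => (P t 0 / t) * T (eVec 2 0) j + (1 - P t 0 / t) * T (eVec 2 1) j) := by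
      rw [Filter.eventuallyEq_iff_exists_mem]
      refine ⟨{t | 1 ≤ t} ∩ I, ?_, fun t ht => ?_⟩
      · rw [Filter.mem_inf_principal]
        filter_upwards [eventually_ge_atTop (1:ℝ)] with t h1 h2
        exact ⟨h1, h2⟩
      · have ht0 : (0:ℝ) < t := lt_of_lt_of_le zero_lt_one ht.1
        show T (P t) j / t = _
        rw [hdec t ht.2]
        have h2 : P t 1 = t - P t 0 := by linarith [hsum2 t ht.2]
        rw [h2]
        field_simp
    rw [Filter.tendsto_congr' hev]
    have h3 : Tendsto (fun t => (P t 0 / t) * T (eVec 2 0) j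
        + (1 - P t 0 / t) * T (eVec 2 1) j) (atTop ⊓ 𝓟 I)
        (nhds (0 * T (eVec 2 0) j + (1 - 0) * T (eVec 2 1) j)) :=
      (hg.mul tendsto_const_nhds).add ((tendsto_const_nhds.sub hg).mul tendsto_const_nhds)
    simpa using h3
  rw [← eFin2] at hlim
  exact hlim.liminf_eq

end PMuAux


/-- **Lemma (image of `μ_T`).** Let `T : ℝ^n → ℝ^m` be linear.  If `n ≥ 3`, then
`Im(μ_T) = Im*(μ_T) ∪ Im(μ_{T∘ι})`, while if `n = 2` then
`Im(μ_T) = Im*(μ_T) ∪ {T(0,1)}`.  Here `Im(μ_T)` ranges over `n`-systems with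
unbounded domain and `Im*(μ_T)` over proper `n`-systems. -/
theorem image_muT_decomposition (n m : ℕ) (hn : 2 ≤ n)
    (T : RVec n → RVec m) (hT : IsLinearMap ℝ T) :
    (3 ≤ n →
      {y : RVec m | ∃ I P, IsNSystem n I P ∧ ¬ BddAbove I ∧ muT n m T I P = y}
        = {y : RVec m | ∃ I P, IsProperSys n I P ∧ muT n m T I P = y}
          ∪ {y : RVec m | ∃ I R, IsNSystem (n - 1) I R ∧ ¬ BddAbove I ∧
              muT (n - 1) m (fun x => T (iotaEmb n x)) I R = y}) ∧
    (n = 2 →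
      {y : RVec m | ∃ I P, IsNSystem n I P ∧ ¬ BddAbove I ∧ muT n m T I P = y}
        = {y : RVec m | ∃ I P, IsProperSys n I P ∧ muT n m T I P = y}
          ∪ {T (fun i => if (i : ℕ) = 0 then 0 else 1)}) := by
  constructor
  · intro _hn3
    obtain ⟨n', rfl⟩ : ∃ n', n = n' + 1 := ⟨n - 1, by omega⟩
    ext y
    simp only [Set.mem_union, Set.mem_setOf_eq]
    constructor
    · rintro ⟨I, P, hP, hub, rfl⟩
      by_cases hprop : ∀ M : ℝ, ∃ q ∈ I, ∀ i, M < P q i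
      · exact Or.inl ⟨I, P, ⟨hP, hprop⟩, rfl⟩
      · push_neg at hprop
        obtain ⟨M, hM⟩ := hprop
        have hM0 : ∀ q ∈ I, P q 0 ≤ M := fun q hq => by
          obtain ⟨i, hi⟩ := hM q hq
          exact le_trans ((hP.2.2.2 q hq).1.2.1 (Fin.zero_le i)) hi
        obtain ⟨I', R, hR, hub', hmu⟩ := PMuAux.reduce hP hub hM0
        exact Or.inr ⟨I', R, hR, hub', hmu m T hT⟩
    · rintro (⟨I, P, ⟨hP, hprop⟩, rfl⟩ | ⟨I, R, hR, hub, rfl⟩)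
      · refine ⟨I, P, hP, ?_, rfl⟩
        rintro ⟨u, hu⟩
        obtain ⟨q, hqI, hq⟩ := hprop u
        have h1 : P q 0 ≤ ∑ i, P q i :=
          Finset.single_le_sum (fun i _ => (hP.2.2.2 q hqI).1.1 i) (Finset.mem_univ 0)
        have h2 := (hP.2.2.2 q hqI).1.2.2
        have h3 := hu hqI
        have h4 := hq 0
        rw [h2] at h1
        linarith
      · exact ⟨I, fun q => iotaEmb (n'+1) (R q), PMuAux.embed hR, hub, rfl⟩
  · intro hn2
    subst hn2
    ext y
    simp only [Set.mem_union, Set.mem_setOf_eq, Set.mem_singleton_iff]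
    constructor
    · rintro ⟨I, P, hP, hub, rfl⟩
      by_cases hprop : ∀ M : ℝ, ∃ q ∈ I, ∀ i, M < P q i
      · exact Or.inl ⟨I, P, ⟨hP, hprop⟩, rfl⟩
      · push_neg at hprop
        obtain ⟨M, hM⟩ := hprop
        have hM0 : ∀ q ∈ I, P q 0 ≤ M := fun q hq => by
          obtain ⟨i, hi⟩ := hM q hq
          exact le_trans ((hP.2.2.2 q hq).1.2.1 (Fin.zero_le i)) hi
        exact Or.inr (PMuAux.two_nonproper hP hub hM0 T hT)
    · rintro (⟨I, P, ⟨hP, hprop⟩, rfl⟩ | rfl)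
      · refine ⟨I, P, hP, ?_, rfl⟩
        rintro ⟨u, hu⟩
        obtain ⟨q, hqI, hq⟩ := hprop u
        have h1 : P q 0 ≤ ∑ i, P q i :=
          Finset.single_le_sum (fun i _ => (hP.2.2.2 q hqI).1.1 i) (Finset.mem_univ 0)
        have h2 := (hP.2.2.2 q hqI).1.2.2
        have h3 := hu hqI
        have h4 := hq 0
        rw [h2] at h1
        linarith
      · exact ⟨Ici 1, fun q => q • eVec 2 1, PMuAux.two_sys,
          not_bddAbove_Ici (1:ℝ), PMuAux.two_mu T hT⟩
end
end

section
/- Let n ≥ 2, let P : [w_0, ∞) → ℝ^n be a proper n-system whose division numbers, enumerated in increasing order, are w_0 < w_1 < w_2 < ⋯, and let E be the set of limit points of the sequence (w_i^{-1} P(w_i))_{i≥1}. Then K(P) is the convex hull of E. -/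
open Filter Set Pointwise Topology

noncomputable section

namespace HullAux

variable {n : ℕ} {w₀ : ℝ} {P : ℝ → RVec n}

lemma coord_nonneg (hP : IsNSystem n (Set.Ici w₀) P) {q : ℝ} (hq : w₀ ≤ q) (i : Fin n) :
    0 ≤ P q i := (hP.2.2.2 q hq).1.1 i

lemma coord_le (hP : IsNSystem n (Set.Ici w₀) P) {q : ℝ} (hq : w₀ ≤ q) (i : Fin n) :
    P q i ≤ q := by
  have h := (hP.2.2.2 q hq).1
  calc P q i ≤ ∑ j, P q j :=
    Finset.single_le_sum (fun j _ => h.1 j) (Finset.mem_univ i)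
  _ = q := h.2.2

lemma w₀_nonneg (hP : IsNSystem n (Set.Ici w₀) P) : 0 ≤ w₀ :=
  hP.1 (Set.self_mem_Ici)

/-- (S2) data at a point. -/
lemma s2 (hP : IsNSystem n (Set.Ici w₀) P) {q : ℝ} (hq : w₀ ≤ q) :
    ∃ ε > (0 : ℝ), ∃ k ℓ : Fin n,
      (∀ t ∈ Set.Ici w₀ ∩ Set.Icc (q - ε) q, P t = P q + (t - q) • eVec n ℓ) ∧
      (∀ t ∈ Set.Ici w₀ ∩ Set.Icc q (q + ε), P t = P q + (t - q) • eVec n k) := by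
  obtain ⟨ε, hε, k, ℓ, h1, h2, _⟩ := (hP.2.2.2 q hq).2
  exact ⟨ε, hε, k, ℓ, h1, h2⟩

end HullAux
namespace HullAux2
open HullAux

variable {n : ℕ} {w₀ : ℝ} {P : ℝ → RVec n}

lemma affine_piece (hP : IsNSystem n (Set.Ici w₀) P)
    {a b : ℝ} (ha : w₀ ≤ a) (hab : a < b)
    (hnd : ∀ t, a < t → t < b → ¬ IsDivisionNumber n (Set.Ici w₀) P t) :
    ∃ j : Fin n, ∀ t ∈ Set.Icc a b, P t = P a + (t - a) • eVec n j := by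
  obtain ⟨ε₀, hε₀, k₀, ℓ₀, _, hright⟩ := s2 hP ha
  refine ⟨k₀, ?_⟩
  set j := k₀
  set A : Set ℝ := {t | t ∈ Set.Icc a b ∧ ∀ u ∈ Set.Icc a t, P u = P a + (u - a) • eVec n j}
    with hA
  have haA : a ∈ A := by
    refine ⟨⟨le_refl a, hab.le⟩, fun u hu => ?_⟩
    have : u = a := le_antisymm hu.2 hu.1
    subst this; simp
  have hbdd : BddAbove A := ⟨b, fun t ht => ht.1.2⟩
  set s := sSup A with hs
  have hsa : a ≤ s := le_csSup hbdd haA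
  have hsb : s ≤ b := csSup_le ⟨a, haA⟩ (fun t ht => ht.1.2)
  -- formula on [a, s)
  have hlt : ∀ u, a ≤ u → u < s → P u = P a + (u - a) • eVec n j := by
    intro u hau hus
    obtain ⟨t, htA, hut⟩ := exists_lt_of_lt_csSup ⟨a, haA⟩ hus
    exact htA.2 u ⟨hau, hut.le⟩
  -- s > a
  have hsgt : a < s := by
    have hmem : min (a + ε₀) b ∈ A := by
      constructor
      · exact ⟨le_min (by linarith) hab.le, min_le_right _ _⟩
      · intro u hu
        have hub : u ≤ a + ε₀ := le_trans hu.2 (min_le_left _ _)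
        have := hright u ⟨le_trans ha hu.1, hu.1, hub⟩
        rw [this]
    have := le_csSup hbdd hmem
    have h1 : a < min (a + ε₀) b := lt_min (by linarith) hab
    linarith
  -- s satisfies the formula (and the left slope equals e_j)
  obtain ⟨ε₁, hε₁, k₁, ℓ₁, hleft₁, hright₁⟩ := s2 hP (le_trans ha hsa)
  set δ := min ε₁ (s - a) with hδ
  have hδ0 : 0 < δ := lt_min hε₁ (by linarith)
  have ht1 : ∀ c : ℝ, 0 < c → c ≤ 1 → a ≤ s - c * δ ∧ s - ε₁ ≤ s - c * δ ∧ s - c * δ < s := by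
    intro c hc hc1
    have h1 : c * δ ≤ δ := by nlinarith
    have h2 : δ ≤ s - a := min_le_right _ _
    have h3 : δ ≤ ε₁ := min_le_left _ _
    have h4 : 0 < c * δ := mul_pos hc hδ0
    exact ⟨by linarith, by nlinarith, by linarith⟩
  set t₁ := s - (1 : ℝ) * δ with hht1
  set t₂ := s - (1/2 : ℝ) * δ with hht2
  obtain ⟨h1a, h1b, h1c⟩ := ht1 1 one_pos le_rfl
  obtain ⟨h2a, h2b, h2c⟩ := ht1 (1/2) (by norm_num) (by norm_num)
  have hP1 : P t₁ = P a + (t₁ - a) • eVec n j := hlt t₁ h1a h1c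
  have hP2 : P t₂ = P a + (t₂ - a) • eVec n j := hlt t₂ h2a h2c
  have hL1 : P t₁ = P s + (t₁ - s) • eVec n ℓ₁ :=
    hleft₁ t₁ ⟨le_trans ha h1a, h1b, h1c.le⟩
  have hL2 : P t₂ = P s + (t₂ - s) • eVec n ℓ₁ :=
    hleft₁ t₂ ⟨le_trans ha h2a, h2b, h2c.le⟩
  have ht12 : t₂ - t₁ = (1/2) * δ := by rw [hht1, hht2]; ring
  have hslope : eVec n ℓ₁ = eVec n j := by
    have e1 : (t₂ - t₁) • eVec n ℓ₁ = (t₂ - t₁) • eVec n j := by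
      have : P t₂ - P t₁ = (t₂ - t₁) • eVec n ℓ₁ := by rw [hL1, hL2]; module
      rw [hP1, hP2] at this
      rw [← this]; module
    have hne : t₂ - t₁ ≠ 0 := by rw [ht12]; positivity
    exact smul_right_injective (RVec n) hne e1
  have hPs : P s = P a + (s - a) • eVec n j := by
    have := hL1
    rw [hP1, hslope] at this
    have h := this
    -- P a + (t₁ - a) • e = P s + (t₁ - s) • e
    have : P s = P a + (t₁ - a) • eVec n j - (t₁ - s) • eVec n j := by
      rw [eq_comm] at h
      rw [eq_sub_iff_add_eq, ← h]
    rw [this]; module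
  have hsA : s ∈ A := by
    refine ⟨⟨hsa, hsb⟩, fun u hu => ?_⟩
    rcases lt_or_eq_of_le hu.2 with h | h
    · exact hlt u hu.1 h
    · rw [h]; exact hPs
  -- s = b
  have hsb' : s = b := by
    by_contra hne
    have hsltb : s < b := lt_of_le_of_ne hsb hne
    have hint : s ∈ interior (Set.Ici w₀) := by
      rw [interior_Ici]; exact lt_of_le_of_lt ha hsgt
    have hk₁ℓ₁ : k₁ = ℓ₁ := by
      by_contra hkl
      exact hnd s hsgt hsltb ⟨le_trans ha hsa, Or.inr ⟨hint, ε₁, hε₁, k₁, ℓ₁, hkl, hleft₁, hright₁⟩⟩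
    have hmem : min (s + ε₁) b ∈ A := by
      refine ⟨⟨le_trans hsa (le_min (by linarith) hsltb.le), min_le_right _ _⟩, fun u hu => ?_⟩
      rcases le_or_gt u s with h | h
      · rcases lt_or_eq_of_le h with h' | h'
        · exact hlt u hu.1 h'
        · rw [h']; exact hPs
      · have hus : u ≤ s + ε₁ := le_trans hu.2 (min_le_left _ _)
        have := hright₁ u ⟨le_trans ha (le_trans hsa h.le), h.le, hus⟩
        rw [this, hk₁ℓ₁, hslope, hPs]; module
    have := le_csSup hbdd hmem
    have : s < min (s + ε₁) b := lt_min (by linarith) hsltb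
    linarith
  intro t ht
  rcases lt_or_eq_of_le ht.2 with h | h
  · exact hlt t ht.1 (hsb' ▸ h)
  · rw [h, ← hsb']; exact hPs

end HullAux2
namespace HullAux3
open HullAux HullAux2

variable {n : ℕ} {w₀ : ℝ} {P : ℝ → RVec n}

lemma div_unbounded (hn : 2 ≤ n) (hP : IsProperSys n (Set.Ici w₀) P) (B : ℝ) :
    ∃ t, B < t ∧ IsDivisionNumber n (Set.Ici w₀) P t := by
  by_contra hcon
  push_neg at hcon
  set a := max B w₀ + 1 with haa
  have haw : w₀ ≤ a := by have := le_max_right B w₀; linarith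
  have haB : B < a := by have := le_max_left B w₀; linarith
  have hw0 : 0 ≤ w₀ := w₀_nonneg hP.1
  obtain ⟨q, hq, hqall⟩ := hP.2 a
  have hqa : a < q := by
    by_contra h
    push_neg at h
    have := coord_le hP.1 hq ⟨0, by omega⟩
    have := hqall ⟨0, by omega⟩
    linarith
  obtain ⟨j, hj⟩ := affine_piece hP.1 haw hqa
    (fun t hat htq => hcon t (lt_trans haB hat))
  -- pick an index different from j
  have : ∃ i : Fin n, i ≠ j := by
    rcases Nat.eq_zero_or_pos (j : ℕ) with h | h
    · exact ⟨⟨1, by omega⟩, by intro he; rw [← he] at h; simp at h⟩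
    · exact ⟨⟨0, by omega⟩, by intro he; rw [← he] at h; simp at h⟩
  obtain ⟨i, hij⟩ := this
  have hPq : P q i = P a i := by
    have := hj q ⟨hqa.le, le_refl q⟩
    rw [this]
    simp [eVec, Fin.val_eq_val, hij]
  have h1 : P a i ≤ a := coord_le hP.1 haw i
  have h2 : a < P q i := hqall i
  linarith

lemma w_tendsto (hn : 2 ≤ n) (hP : IsProperSys n (Set.Ici w₀) P)
    (w : ℕ → ℝ) (hmono : StrictMono w)
    (hall : ∀ q, IsDivisionNumber n (Set.Ici w₀) P q → ∃ i, q = w i) :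
    Tendsto w atTop atTop := by
  apply tendsto_atTop_atTop_of_monotone hmono.monotone
  intro B
  obtain ⟨t, hBt, ht⟩ := div_unbounded hn hP B
  obtain ⟨i, rfl⟩ := hall t ht
  exact ⟨i, hBt.le⟩

end HullAux3
namespace HullAux4

/-- Convex interpolation of normalized points along an affine piece. -/
lemma interp {n : ℕ} (A B t : ℝ) (vA : RVec n) (v : RVec n)
    (hA : 0 < A) (hAt : A ≤ t) (htB : t < B) :
    t⁻¹ • (vA + (t - A) • v) =
      ((B - t) * A / (t * (B - A))) • (A⁻¹ • vA) +
      (1 - (B - t) * A / (t * (B - A))) • (B⁻¹ • (vA + (B - A) • v)) := by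
  have ht : (0:ℝ) < t := lt_of_lt_of_le hA hAt
  have hB : (0:ℝ) < B := lt_trans ht htB
  have hBA : (0:ℝ) < B - A := by linarith
  funext i
  simp only [Pi.add_apply, Pi.smul_apply, smul_eq_mul]
  field_simp
  ring

lemma c_nonneg {A B t : ℝ} (hA : 0 < A) (hAt : A ≤ t) (htB : t < B) :
    0 ≤ (B - t) * A / (t * (B - A)) := by
  have ht : (0:ℝ) < t := lt_of_lt_of_le hA hAt
  apply div_nonneg
  · nlinarith
  · nlinarith

lemma c_le_one {A B t : ℝ} (hA : 0 < A) (hAt : A ≤ t) (htB : t < B) :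
    (B - t) * A / (t * (B - A)) ≤ 1 := by
  have ht : (0:ℝ) < t := lt_of_lt_of_le hA hAt
  rw [div_le_one (by nlinarith)]
  nlinarith

end HullAux4
namespace HullAux5
open HullAux HullAux2 HullAux3 HullAux4

lemma exists_subseq {m : ℕ → ℕ} (hm : Tendsto m atTop atTop) :
    ∃ ψ : ℕ → ℕ, StrictMono ψ ∧ 2 ≤ m (ψ 0) ∧ StrictMono (m ∘ ψ) := by
  have h := tendsto_atTop_atTop.mp hm
  choose N hN using h
  set f : ℕ → ℕ := fun j => Nat.rec (N 2) (fun _ p => max (p + 1) (N (m p + 1))) j with hf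
  have hfs : ∀ j, f (j + 1) = max (f j + 1) (N (m (f j) + 1)) := fun j => rfl
  have hmono : StrictMono f := by
    apply strictMono_nat_of_lt_succ
    intro j
    rw [hfs]
    omega
  have hstep : ∀ j, m (f j) < m (f (j + 1)) := by
    intro j
    have := hN (m (f j) + 1) (f (j + 1)) (by rw [hfs]; omega)
    omega
  exact ⟨f, hmono, hN 2 (f 0) le_rfl, strictMono_nat_of_lt_succ hstep⟩

variable {n : ℕ} {w₀ : ℝ} {P : ℝ → RVec n}

lemma fset_subset_hull (hn : 2 ≤ n) (hP : IsProperSys n (Set.Ici w₀) P)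
    (w : ℕ → ℝ) (hw0 : w 0 = w₀) (hmono : StrictMono w)
    (_hdiv : ∀ i, IsDivisionNumber n (Set.Ici w₀) P (w i))
    (hall : ∀ q, IsDivisionNumber n (Set.Ici w₀) P q → ∃ i, q = w i) :
    FSet n (Set.Ici w₀) P ⊆ convexHull ℝ {x : RVec n | ∃ φ : ℕ → ℕ, StrictMono φ ∧
      (∀ j, 1 ≤ φ j) ∧
      Filter.Tendsto (fun j => (w (φ j))⁻¹ • P (w (φ j))) Filter.atTop (nhds x)} := by
  set E := {x : RVec n | ∃ φ : ℕ → ℕ, StrictMono φ ∧ (∀ j, 1 ≤ φ j) ∧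
      Filter.Tendsto (fun j => (w (φ j))⁻¹ • P (w (φ j))) Filter.atTop (nhds x)} with hE
  intro x hx
  obtain ⟨q, hqI, hqmono, hqtop, hqlim⟩ := hx
  have htop := w_tendsto hn hP w hmono hall
  have hw0n : 0 ≤ w₀ := w₀_nonneg hP.1
  have hex : ∀ i, ∃ m', q i < w m' := fun i => (htop.eventually_gt_atTop (q i)).exists
  set m : ℕ → ℕ := fun i => Nat.find (hex i) with hm
  have hwm : ∀ i, q i < w (m i) := fun i => Nat.find_spec (hex i)
  have hm1 : ∀ i, 1 ≤ m i := by
    intro i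
    rcases Nat.eq_zero_or_pos (m i) with h | h
    · exfalso
      have := hwm i
      rw [h, hw0] at this
      exact absurd (hqI i) (by simpa using this.not_ge)
    · exact h
  have hwk : ∀ i, w (m i - 1) ≤ q i := by
    intro i
    have := Nat.find_min (hex i) (show m i - 1 < m i by have := hm1 i; omega)
    exact not_lt.mp this
  have hmtop : Tendsto m atTop atTop := by
    rw [tendsto_atTop_atTop]
    intro b
    obtain ⟨N, hN⟩ := (hqtop.eventually_ge_atTop (w b)).exists_forall_of_atTop
    refine ⟨N, fun i hi => ?_⟩
    by_contra h
    push_neg at h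
    have h1 : w (m i) ≤ w b := hmono.monotone (by omega)
    have := hwm i
    have := hN i hi
    linarith
  obtain ⟨ψ, hψ, hψ2, hψm⟩ := exists_subseq hmtop
  -- notation for this subsequence
  set k : ℕ → ℕ := fun j => m (ψ j) - 1 with hk
  have hmj2 : ∀ j, 2 ≤ m (ψ j) := fun j => le_trans hψ2 (hψm.monotone (Nat.zero_le j))
  have hk1 : ∀ j, 1 ≤ k j := fun j => by have := hmj2 j; simp [hk]; omega
  have hksucc : ∀ j, k j + 1 = m (ψ j) := fun j => by have := hmj2 j; simp [hk]; omega
  have hA0 : ∀ j, 0 < w (k j) := by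
    intro j
    have h1 : w 0 < w 1 := hmono (by omega)
    have h2 : w 1 ≤ w (k j) := hmono.monotone (hk1 j)
    rw [hw0] at h1
    linarith
  have hAt : ∀ j, w (k j) ≤ q (ψ j) := fun j => hwk (ψ j)
  have htB : ∀ j, q (ψ j) < w (k j + 1) := fun j => by rw [hksucc]; exact hwm (ψ j)
  have hwkw₀ : ∀ j : ℕ, w₀ ≤ w j := by
    intro j
    rw [← hw0]
    exact hmono.monotone (Nat.zero_le j)
  -- affine pieces
  have haff : ∀ j, ∃ jj : Fin n, ∀ t ∈ Set.Icc (w (k j)) (w (k j + 1)),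
      P t = P (w (k j)) + (t - w (k j)) • eVec n jj := by
    intro j
    apply affine_piece hP.1 (hwkw₀ (k j)) (hmono (Nat.lt_succ_self _))
    intro t h1 h2 hdt
    obtain ⟨i, rfl⟩ := hall t hdt
    rcases le_or_gt i (k j) with h | h
    · exact absurd (hmono.monotone h) (not_le.mpr h1)
    · exact absurd (hmono.monotone h) (not_le.mpr h2)
  choose jj hjj using haff
  set u : ℕ → RVec n := fun kk => (w kk)⁻¹ • P (w kk) with hu
  set c : ℕ → ℝ := fun j =>
    (w (k j + 1) - q (ψ j)) * w (k j) / (q (ψ j) * (w (k j + 1) - w (k j))) with hc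
  -- the key identity
  have hiden : ∀ j, (q (ψ j))⁻¹ • P (q (ψ j)) = c j • u (k j) + (1 - c j) • u (m (ψ j)) := by
    intro j
    have hPt : P (q (ψ j)) = P (w (k j)) + (q (ψ j) - w (k j)) • eVec n (jj j) :=
      hjj j _ ⟨hAt j, (htB j).le⟩
    have hPB : P (w (k j + 1)) = P (w (k j)) + (w (k j + 1) - w (k j)) • eVec n (jj j) :=
      hjj j _ ⟨(hmono (Nat.lt_succ_self _)).le, le_refl _⟩
    rw [hPt]
    have := interp (w (k j)) (w (k j + 1)) (q (ψ j)) (P (w (k j))) (eVec n (jj j))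
      (hA0 j) (hAt j) (htB j)
    rw [this, hu]
    simp only
    rw [← hPB, ← hksucc]
  have hc01 : ∀ j, c j ∈ Set.Icc (0:ℝ) 1 :=
    fun j => ⟨c_nonneg (hA0 j) (hAt j) (htB j), c_le_one (hA0 j) (hAt j) (htB j)⟩
  have humem : ∀ kk : ℕ, 1 ≤ kk → u kk ∈ Set.Icc (0 : RVec n) 1 := by
    intro kk hkk
    have hwpos : 0 < w kk := by
      have h1 : w 0 < w 1 := hmono (by omega)
      have h2 : w 1 ≤ w kk := hmono.monotone hkk
      rw [hw0] at h1
      linarith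
    constructor
    · intro i
      simp only [hu, Pi.smul_apply, smul_eq_mul, Pi.zero_apply]
      exact mul_nonneg (inv_nonneg.mpr hwpos.le) (coord_nonneg hP.1 (hwkw₀ kk) i)
    · intro i
      simp only [hu, Pi.smul_apply, smul_eq_mul, Pi.one_apply]
      rw [← div_eq_inv_mul, div_le_one hwpos]
      exact coord_le hP.1 (hwkw₀ kk) i
  -- compactness extraction
  set z : ℕ → ℝ × RVec n × RVec n := fun j => (c j, u (k j), u (m (ψ j))) with hz
  have hKcomp : IsCompact ((Set.Icc (0:ℝ) 1) ×ˢ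
      ((Set.Icc (0:RVec n) 1) ×ˢ (Set.Icc (0:RVec n) 1))) :=
    isCompact_Icc.prod (isCompact_Icc.prod isCompact_Icc)
  have hzmem : ∀ j, z j ∈ (Set.Icc (0:ℝ) 1) ×ˢ
      ((Set.Icc (0:RVec n) 1) ×ˢ (Set.Icc (0:RVec n) 1)) :=
    fun j => ⟨hc01 j, humem _ (hk1 j), humem _ (by have := hmj2 j; omega)⟩
  obtain ⟨⟨lam, aa, bb⟩, hmemK, φ, hφ, hzlim⟩ := hKcomp.tendsto_subseq hzmem
  have hclim : Tendsto (fun j' => c (φ j')) atTop (𝓝 lam) :=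
    (continuous_fst.tendsto _).comp hzlim
  have halim : Tendsto (fun j' => u (k (φ j'))) atTop (𝓝 aa) :=
    ((continuous_fst.comp continuous_snd).tendsto _).comp hzlim
  have hblim : Tendsto (fun j' => u (m (ψ (φ j')))) atTop (𝓝 bb) :=
    ((continuous_snd.comp continuous_snd).tendsto _).comp hzlim
  have haaE : aa ∈ E := by
    refine ⟨fun j' => k (φ j'), ?_, fun j' => hk1 (φ j'), halim⟩
    intro a b hab
    have := (hψm.comp hφ) hab
    have h2a := hmj2 (φ a)
    simp only [hk, Function.comp] at this ⊢
    omega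
  have hbbE : bb ∈ E := by
    refine ⟨fun j' => m (ψ (φ j')), hψm.comp hφ, fun j' => le_trans (by norm_num) (hmj2 (φ j')), hblim⟩
  have hcomb : Tendsto (fun j' => c (φ j') • u (k (φ j')) + (1 - c (φ j')) • u (m (ψ (φ j'))))
      atTop (𝓝 (lam • aa + (1 - lam) • bb)) :=
    (hclim.smul halim).add ((tendsto_const_nhds.sub hclim).smul hblim)
  have hx2 : Tendsto (fun j' => (q (ψ (φ j')))⁻¹ • P (q (ψ (φ j')))) atTop (𝓝 x) :=
    hqlim.comp ((hψ.comp hφ).tendsto_atTop)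
  have hxeq : x = lam • aa + (1 - lam) • bb := by
    apply tendsto_nhds_unique hx2
    exact Tendsto.congr (fun j' => (hiden (φ j')).symm) hcomb
  rw [hxeq]
  have hlam0 : 0 ≤ lam := hmemK.1.1
  have hlam1 : lam ≤ 1 := hmemK.1.2
  exact (convex_convexHull ℝ E) (subset_convexHull ℝ E haaE) (subset_convexHull ℝ E hbbE)
    hlam0 (by linarith) (by ring)

end HullAux5
/-- **Proposition (convex hull via division points).** Let `P` be a proper `n`-system
on `[w₀, ∞)` with division numbers `w₀ = w(0) < w(1) < w(2) < ⋯`, and let `E` be the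
set of limit points of the sequence `(w_i⁻¹ • P(w_i))_{i≥1}`.  Then `K(P)`, the convex
hull of `F(P)`, equals the convex hull of `E`. -/
theorem hull_eq_hull_of_division_limits (n : ℕ) (hn : 2 ≤ n) (w₀ : ℝ)
    (P : ℝ → RVec n) (hP : IsProperSys n (Set.Ici w₀) P)
    (w : ℕ → ℝ) (hw0 : w 0 = w₀) (hmono : StrictMono w)
    (hdiv : ∀ i, IsDivisionNumber n (Set.Ici w₀) P (w i))
    (hall : ∀ q, IsDivisionNumber n (Set.Ici w₀) P q → ∃ i, q = w i) :
    convexHull ℝ (FSet n (Set.Ici w₀) P) =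
      convexHull ℝ {x : RVec n | ∃ φ : ℕ → ℕ, StrictMono φ ∧ (∀ j, 1 ≤ φ j) ∧
        Filter.Tendsto (fun j => (w (φ j))⁻¹ • P (w (φ j))) Filter.atTop (nhds x)} := by
  apply Set.Subset.antisymm
  · exact convexHull_min
      (HullAux5.fset_subset_hull hn hP w hw0 hmono hdiv hall) (convex_convexHull ℝ _)
  · apply convexHull_mono
    rintro x ⟨φ, hφ, hφ1, hlim⟩
    exact ⟨fun j => w (φ j), fun j => (hdiv (φ j)).1, hmono.comp hφ,
      (HullAux3.w_tendsto hn hP w hmono hall).comp hφ.tendsto_atTop, hlim⟩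
end
end

section
/- Let n ≥ 2 and let P : [w_0, ∞) → ℝ^n be a proper n-system whose division numbers, enumerated in increasing order, are w_0 < w_1 < w_2 < ⋯. Suppose P is self-similar, with ρ > 1 such that P(ρq) = ρP(q) for every q ≥ w_0, and let s ≥ 1 be the index for which ρw_1 = w_{s+1}. Then K(P) is the convex hull of the finite set {w_1^{-1}P(w_1), …, w_s^{-1}P(w_s)}. -/
open Filter Set Pointwise Topology

noncomputable section

lemma affine_seg (n : ℕ) (w₀ : ℝ) (P : ℝ → RVec n)
    (hsys : IsNSystem n (Set.Ici w₀) P)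
    (a b : ℝ) (hab : a < b) (ha : w₀ ≤ a)
    (hnd : ∀ t, a < t → t < b → ¬ IsDivisionNumber n (Set.Ici w₀) P t) :
    ∃ k : Fin n, ∀ t ∈ Set.Icc a b, P t = P a + (t - a) • eVec n k := by
  obtain ⟨hI0, hconn, hint, hS⟩ := hsys
  obtain ⟨-, ε₀, hε₀, k, ℓ₀, hL₀, hR₀, -⟩ := hS a (Set.mem_Ici.2 ha)
  refine ⟨k, ?_⟩
  set A : Set ℝ := {c | c ∈ Set.Icc a b ∧
    ∀ t ∈ Set.Icc a c, P t = P a + (t - a) • eVec n k} with hA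
  have haA : a ∈ A := by
    refine ⟨⟨le_refl a, hab.le⟩, fun t ht => ?_⟩
    have : t = a := le_antisymm ht.2 ht.1
    subst this; simp
  have hbdd : BddAbove A := ⟨b, fun x hx => hx.1.2⟩
  set c := sSup A with hc
  have hac : a ≤ c := le_csSup hbdd haA
  have hcb : c ≤ b := csSup_le ⟨a, haA⟩ (fun x hx => hx.1.2)
  have hIco : ∀ t, a ≤ t → t < c → P t = P a + (t - a) • eVec n k := by
    intro t h1 h2
    obtain ⟨c', hc'A, hc'⟩ := exists_lt_of_lt_csSup ⟨a, haA⟩ h2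
    exact hc'A.2 t ⟨h1, hc'.le⟩
  -- slope matching: a left formula at c must have slope `eVec n k`
  have hmatch : ∀ (ε : ℝ), 0 < ε → ∀ ℓ' : Fin n,
      (∀ t ∈ Set.Ici w₀ ∩ Set.Icc (c - ε) c, P t = P c + (t - c) • eVec n ℓ') →
      a < c → (eVec n (ℓ' : ℕ) = eVec n (k : ℕ)) ∧
        P c = P a + (c - a) • eVec n k := by
    intro ε hε ℓ' hL hac'
    set m := max a (c - ε) with hm
    have hmc : m < c := max_lt hac' (by linarith)
    set t1 := m + (c - m) / 3 with ht1
    set t2 := m + (c - m) * 2 / 3 with ht2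
    have hma : a ≤ m := le_max_left _ _
    have hmε : c - ε ≤ m := le_max_right _ _
    have h1a : a ≤ t1 := by simp only [ht1]; nlinarith
    have h2a : a ≤ t2 := by simp only [ht2]; nlinarith
    have h1c : t1 < c := by simp only [ht1]; nlinarith
    have h2c : t2 < c := by simp only [ht2]; nlinarith
    have h1ε : c - ε ≤ t1 := by simp only [ht1]; nlinarith
    have h2ε : c - ε ≤ t2 := by simp only [ht2]; nlinarith
    have hne12 : t1 ≠ t2 := by simp only [ht1, ht2]; intro h; nlinarith
    have e1 : P t1 = P a + (t1 - a) • eVec n k := hIco t1 h1a h1c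
    have e2 : P t2 = P a + (t2 - a) • eVec n k := hIco t2 h2a h2c
    have f1 : P t1 = P c + (t1 - c) • eVec n ℓ' :=
      hL t1 ⟨ha.trans h1a, h1ε, h1c.le⟩
    have f2 : P t2 = P c + (t2 - c) • eVec n ℓ' :=
      hL t2 ⟨ha.trans h2a, h2ε, h2c.le⟩
    have key : (t1 - t2) • eVec n (ℓ' : ℕ) = (t1 - t2) • eVec n (k : ℕ) := by
      linear_combination (norm := module) (f1.symm.trans e1) - (f2.symm.trans e2)
    have hE : eVec n (ℓ' : ℕ) = eVec n (k : ℕ) :=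
      smul_right_injective (RVec n) (sub_ne_zero.2 hne12) key
    refine ⟨hE, ?_⟩
    rw [hE] at f1
    linear_combination (norm := module) e1 - f1
  -- c ∈ A
  have hPc : P c = P a + (c - a) • eVec n k := by
    rcases eq_or_lt_of_le hac with h | h
    · rw [← h]; simp
    · obtain ⟨-, ε, hε, k', ℓ', hL, hR, -⟩ := hS c (ha.trans hac)
      exact (hmatch ε hε ℓ' hL h).2
  -- c = b
  have hcbeq : c = b := by
    by_contra hne
    have hlt : c < b := lt_of_le_of_ne hcb hne
    -- obtain a right formula at c with slope eVec n k
    have hright : ∃ ε > (0:ℝ), ∀ t ∈ Set.Icc c (c + ε),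
        P t = P c + (t - c) • eVec n k := by
      rcases eq_or_lt_of_le hac with h | h
      · refine ⟨ε₀, hε₀, fun t ht => ?_⟩
        rw [← h] at ht ⊢
        exact hR₀ t ⟨ha.trans ht.1, ht⟩
      · obtain ⟨-, ε, hε, k', ℓ', hL, hR, -⟩ := hS c (ha.trans hac)
        obtain ⟨hE, -⟩ := hmatch ε hε ℓ' hL h
        have hkk : k' = ℓ' := by
          by_contra hkk
          refine hnd c h hlt ⟨ha.trans hac, Or.inr ⟨?_, ε, hε, k', ℓ', hkk, hL, hR⟩⟩
          rw [interior_Ici]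
          exact lt_of_le_of_lt ha h
        refine ⟨ε, hε, fun t ht => ?_⟩
        have := hR t ⟨(ha.trans hac).trans ht.1, ht⟩
        rwa [hkk, hE] at this
    obtain ⟨ε, hε, hRf⟩ := hright
    set d := min b (c + ε) with hd
    have hcd : c < d := lt_min hlt (by linarith)
    have hdA : d ∈ A := by
      refine ⟨⟨hac.trans hcd.le, min_le_left _ _⟩, fun t ht => ?_⟩
      rcases le_or_gt t c with h | h
      · rcases eq_or_lt_of_le h with h' | h'
        · rw [h']; exact hPc
        · exact hIco t ht.1 h'
      · have := hRf t ⟨h.le, ht.2.trans (min_le_right _ _)⟩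
        rw [this, hPc]
        module
    exact absurd (le_csSup hbdd hdA) (not_le.2 hcd)
  intro t ht
  rcases lt_or_eq_of_le ht.2 with h | h
  · exact hIco t ht.1 (by rwa [hcbeq])
  · rw [h, ← hcbeq]; exact hPc

lemma div_scale_up (n : ℕ) (w₀ ρ : ℝ) (P : ℝ → RVec n)
    (hw₀ : 0 ≤ w₀) (hρ : 1 < ρ)
    (hss : ∀ q, w₀ ≤ q → P (ρ * q) = ρ • P q)
    (q : ℝ) (hq : w₀ < q)
    (hd : IsDivisionNumber n (Set.Ici w₀) P q) :
    IsDivisionNumber n (Set.Ici w₀) P (ρ * q) := by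
  have hρ0 : (0:ℝ) < ρ := by linarith
  have hq0 : 0 < q := lt_of_le_of_lt hw₀ hq
  have hqρ : q < ρ * q := by nlinarith
  obtain ⟨hqI, hfr | ⟨-, ε, hε, k, ℓ, hkl, hL, hR⟩⟩ := hd
  · rw [frontier_Ici] at hfr
    exact absurd hfr.symm hq.ne
  set ε' := min ε (q - w₀) with hε'def
  have hε' : 0 < ε' := lt_min hε (by linarith)
  have hε'1 : ε' ≤ ε := min_le_left _ _
  have hε'2 : ε' ≤ q - w₀ := min_le_right _ _
  refine ⟨Set.mem_Ici.2 (by nlinarith), Or.inr ⟨?_, ρ * ε', by positivity,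
    k, ℓ, hkl, ?_, ?_⟩⟩
  · rw [interior_Ici]; exact lt_of_le_of_lt (Set.mem_Ici.1 hqI) hqρ
  · rintro t ⟨htI, ht1, ht2⟩
    have htw : w₀ ≤ t := Set.mem_Ici.1 htI
    set u := t / ρ with hu
    have hut : ρ * u = t := by rw [hu, mul_comm, div_mul_cancel₀ _ hρ0.ne']
    have hu1 : q - ε' ≤ u := by
      rw [hu, le_div_iff₀ hρ0]; nlinarith
    have hu2 : u ≤ q := by
      rw [hu, div_le_iff₀ hρ0]; nlinarith
    have huw : w₀ ≤ u := by linarith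
    have := hL u ⟨Set.mem_Ici.2 huw, by linarith, hu2⟩
    rw [← hut, hss u huw, this, hss q hq.le]
    module
  · rintro t ⟨htI, ht1, ht2⟩
    set u := t / ρ with hu
    have hut : ρ * u = t := by rw [hu, mul_comm, div_mul_cancel₀ _ hρ0.ne']
    have hu1 : q ≤ u := by rw [hu, le_div_iff₀ hρ0]; nlinarith
    have hu2 : u ≤ q + ε' := by rw [hu, div_le_iff₀ hρ0]; nlinarith
    have huw : w₀ ≤ u := hq.le.trans hu1
    have := hR u ⟨Set.mem_Ici.2 huw, hu1, by linarith⟩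
    rw [← hut, hss u huw, this, hss q hq.le]
    module

lemma div_scale_down (n : ℕ) (w₀ ρ : ℝ) (P : ℝ → RVec n)
    (hw₀ : 0 ≤ w₀) (hρ : 1 < ρ)
    (hss : ∀ q, w₀ ≤ q → P (ρ * q) = ρ • P q)
    (u : ℝ) (hu : w₀ < u)
    (hd : IsDivisionNumber n (Set.Ici w₀) P (ρ * u)) :
    IsDivisionNumber n (Set.Ici w₀) P u := by
  have hρ0 : (0:ℝ) < ρ := by linarith
  have hu0 : 0 < u := lt_of_le_of_lt hw₀ hu
  have huρ : u < ρ * u := by nlinarith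
  have hinj : Function.Injective (fun x : RVec n => ρ • x) :=
    smul_right_injective (RVec n) hρ0.ne'
  obtain ⟨hqI, hfr | ⟨-, ε, hε, k, ℓ, hkl, hL, hR⟩⟩ := hd
  · rw [frontier_Ici] at hfr
    exact absurd hfr (by intro h; rw [Set.mem_singleton_iff] at h; nlinarith)
  set ε' := min (ε / ρ) (u - w₀) with hε'def
  have hε' : 0 < ε' := lt_min (by positivity) (by linarith)
  have hε'1 : ρ * ε' ≤ ε := by
    have := min_le_left (ε / ρ) (u - w₀)
    calc ρ * ε' ≤ ρ * (ε / ρ) := by nlinarith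
      _ = ε := by field_simp
  have hε'2 : ε' ≤ u - w₀ := min_le_right _ _
  refine ⟨Set.mem_Ici.2 hu.le, Or.inr ⟨?_, ε', hε', k, ℓ, hkl, ?_, ?_⟩⟩
  · rw [interior_Ici]; exact hu
  · rintro t ⟨htI, ht1, ht2⟩
    have htw : w₀ ≤ t := Set.mem_Ici.1 htI
    have ht0 : 0 ≤ t := hw₀.trans htw
    have h1 : ρ * u - ε ≤ ρ * t := by nlinarith
    have h2 : ρ * t ≤ ρ * u := by nlinarith
    have hf := hL (ρ * t) ⟨Set.mem_Ici.2 (by nlinarith), h1, h2⟩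
    apply hinj
    show ρ • P t = ρ • (P u + (t - u) • eVec n ℓ)
    rw [← hss t htw, hf, hss u hu.le]
    module
  · rintro t ⟨htI, ht1, ht2⟩
    have htw : w₀ ≤ t := Set.mem_Ici.1 htI
    have h1 : ρ * u ≤ ρ * t := by nlinarith
    have h2 : ρ * t ≤ ρ * u + ε := by nlinarith
    have hf := hR (ρ * t) ⟨Set.mem_Ici.2 (by nlinarith), h1, h2⟩
    apply hinj
    show ρ • P t = ρ • (P u + (t - u) • eVec n k)
    rw [← hss t htw, hf, hss u hu.le]
    module

lemma rho_w (n : ℕ) (w₀ : ℝ) (P : ℝ → RVec n)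
    (hw₀ : 0 ≤ w₀)
    (w : ℕ → ℝ) (hw0 : w 0 = w₀) (hmono : StrictMono w)
    (hdiv : ∀ i, IsDivisionNumber n (Set.Ici w₀) P (w i))
    (hall : ∀ q, IsDivisionNumber n (Set.Ici w₀) P q → ∃ i, q = w i)
    (ρ : ℝ) (hρ : 1 < ρ) (hss : ∀ q, w₀ ≤ q → P (ρ * q) = ρ • P q)
    (s : ℕ) (hs : 1 ≤ s) (hρw : ρ * w 1 = w (s + 1)) :
    ∀ i, 1 ≤ i → ρ * w i = w (i + s) := by
  have hρ0 : (0:ℝ) < ρ := by linarith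
  have hw₀w : ∀ i, 1 ≤ i → w₀ < w i := by
    intro i hi
    rw [← hw0]
    exact hmono (by omega)
  intro i hi
  induction i, hi using Nat.le_induction with
  | base => rw [hρw]; congr 1; omega
  | succ i hi IH =>
    obtain ⟨m, hm⟩ := hall _ (div_scale_up n w₀ ρ P hw₀ hρ hss (w (i+1))
      (hw₀w (i+1) (by omega)) (hdiv (i+1)))
    have hmgt : i + s < m := by
      rw [← hmono.lt_iff_lt, ← IH, ← hm]
      have := hmono (Nat.lt_succ_self i)
      nlinarith
    have hmle : m ≤ i + s + 1 := by
      by_contra hgt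
      push_neg at hgt
      have h1 : w (i + s) < w (i + s + 1) := hmono (by omega)
      have h2 : w (i + s + 1) < w m := hmono (by omega)
      rw [← IH] at h1
      rw [← hm] at h2
      -- w (i+s+1) / ρ is a division number strictly between w i and w (i+1)
      set u := w (i + s + 1) / ρ with hu
      have hut : ρ * u = w (i + s + 1) := by
        rw [hu, mul_comm, div_mul_cancel₀ _ hρ0.ne']
      have hu1 : w i < u := by
        rw [hu, lt_div_iff₀ hρ0]; nlinarith
      have hu2 : u < w (i + 1) := by
        rw [hu, div_lt_iff₀ hρ0]; nlinarith
      have huw₀ : w₀ < u := (hw₀w i (by omega)).trans hu1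
      obtain ⟨r, hr⟩ := hall u (div_scale_down n w₀ ρ P hw₀ hρ hss u huw₀
        (by rw [hut]; exact hdiv (i + s + 1)))
      rw [hr] at hu1 hu2
      have : i < r := hmono.lt_iff_lt.1 hu1
      have : r < i + 1 := hmono.lt_iff_lt.1 hu2
      omega
    have : m = i + s + 1 := by omega
    rw [hm, this]
    congr 1
    omega

lemma w_unbounded (n : ℕ) (w₀ : ℝ) (P : ℝ → RVec n)
    (hw₀ : 0 ≤ w₀)
    (w : ℕ → ℝ) (hw0 : w 0 = w₀) (hmono : StrictMono w)
    (hdiv : ∀ i, IsDivisionNumber n (Set.Ici w₀) P (w i))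
    (hall : ∀ q, IsDivisionNumber n (Set.Ici w₀) P q → ∃ i, q = w i)
    (ρ : ℝ) (hρ : 1 < ρ) (hss : ∀ q, w₀ ≤ q → P (ρ * q) = ρ • P q)
    (s : ℕ) (hs : 1 ≤ s) (hρw : ρ * w 1 = w (s + 1)) :
    ∀ M : ℝ, ∃ N, M < w N := by
  have hw1pos : 0 < w 1 := by
    rw [← hw0] at hw₀
    exact lt_of_le_of_lt hw₀ (hmono Nat.zero_lt_one)
  have key : ∀ j : ℕ, w (1 + j * s) = ρ ^ j * w 1 := by
    intro j
    induction j with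
    | zero => simp
    | succ j IH =>
      have h1 : 1 + (j + 1) * s = (1 + j * s) + s := by ring
      rw [h1, ← rho_w n w₀ P hw₀ w hw0 hmono hdiv hall ρ hρ hss s hs hρw
        (1 + j * s) (by omega), IH, pow_succ]
      ring
  intro M
  obtain ⟨j, hj⟩ := pow_unbounded_of_one_lt (M / w 1) hρ
  refine ⟨1 + j * s, ?_⟩
  rw [key j]
  rw [div_lt_iff₀ hw1pos] at hj
  linarith

lemma f_mod (n : ℕ) (w₀ : ℝ) (P : ℝ → RVec n)
    (hw₀ : 0 ≤ w₀)
    (w : ℕ → ℝ) (hw0 : w 0 = w₀) (hmono : StrictMono w)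
    (hdiv : ∀ i, IsDivisionNumber n (Set.Ici w₀) P (w i))
    (hall : ∀ q, IsDivisionNumber n (Set.Ici w₀) P q → ∃ i, q = w i)
    (ρ : ℝ) (hρ : 1 < ρ) (hss : ∀ q, w₀ ≤ q → P (ρ * q) = ρ • P q)
    (s : ℕ) (hs : 1 ≤ s) (hρw : ρ * w 1 = w (s + 1)) :
    ∀ j, 1 ≤ j → ∃ r, 1 ≤ r ∧ r ≤ s ∧
      (w j)⁻¹ • P (w j) = (w r)⁻¹ • P (w r) := by
  have hρ0 : (0:ℝ) < ρ := by linarith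
  have hwpos : ∀ i, 1 ≤ i → 0 < w i := by
    intro i hi
    rw [← hw0] at hw₀
    exact lt_of_le_of_lt hw₀ (hmono (by omega))
  intro j
  induction j using Nat.strong_induction_on with
  | _ j IH =>
    intro hj
    by_cases hjs : j ≤ s
    · exact ⟨j, hj, hjs, rfl⟩
    · push_neg at hjs
      obtain ⟨r, hr1, hr2, hr3⟩ := IH (j - s) (by omega) (by omega)
      refine ⟨r, hr1, hr2, ?_⟩
      rw [← hr3]
      have hww : ρ * w (j - s) = w j := by
        rw [rho_w n w₀ P hw₀ w hw0 hmono hdiv hall ρ hρ hss s hs hρw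
          (j - s) (by omega)]
        congr 1
        omega
      have hx : 0 < w (j - s) := hwpos _ (by omega)
      have hwj : w₀ ≤ w (j - s) := by
        rw [← hw0]; exact (hmono.monotone (by omega : 0 ≤ j - s))
      rw [← hww, hss (w (j - s)) hwj, smul_smul]
      congr 1
      field_simp

open Classical in
lemma seg_hull (n : ℕ) (w₀ : ℝ) (P : ℝ → RVec n)
    (hsys : IsNSystem n (Set.Ici w₀) P)
    (hw₀ : 0 ≤ w₀)
    (w : ℕ → ℝ) (hw0 : w 0 = w₀) (hmono : StrictMono w)
    (hdiv : ∀ i, IsDivisionNumber n (Set.Ici w₀) P (w i))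
    (hall : ∀ q, IsDivisionNumber n (Set.Ici w₀) P q → ∃ i, q = w i)
    (ρ : ℝ) (hρ : 1 < ρ) (hss : ∀ q, w₀ ≤ q → P (ρ * q) = ρ • P q)
    (s : ℕ) (hs : 1 ≤ s) (hρw : ρ * w 1 = w (s + 1)) :
    ∀ t : ℝ, w 1 ≤ t → t⁻¹ • P t ∈
      convexHull ℝ {x : RVec n | ∃ i : ℕ, 1 ≤ i ∧ i ≤ s ∧
        x = (w i)⁻¹ • P (w i)} := by
  have hw1pos : 0 < w 1 := by
    rw [← hw0] at hw₀
    exact lt_of_le_of_lt hw₀ (hmono Nat.zero_lt_one)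
  intro t ht
  obtain ⟨N, hN⟩ := w_unbounded n w₀ P hw₀ w hw0 hmono hdiv hall ρ hρ hss
    s hs hρw t
  have hN1 : 1 ≤ N := by
    by_contra h
    push_neg at h
    interval_cases N
    rw [hw0] at hN
    have h01 := hmono Nat.zero_lt_one
    rw [hw0] at h01
    linarith
  have hi1 : 1 ≤ Nat.findGreatest (fun j => w j ≤ t) N :=
    Nat.le_findGreatest hN1 ht
  have hit : w (Nat.findGreatest (fun j => w j ≤ t) N) ≤ t :=
    by simpa using Nat.findGreatest_spec (m := 1) (P := fun j => w j ≤ t) hN1 ht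
  have hle := Nat.findGreatest_le (P := fun j => w j ≤ t) (n := N)
  have hiN : Nat.findGreatest (fun j => w j ≤ t) N ≠ N := by
    intro h
    rw [h] at hit
    exact absurd hit (not_le.2 hN)
  have hib : t < w (Nat.findGreatest (fun j => w j ≤ t) N + 1) := by
    have h2 := Nat.findGreatest_is_greatest (k := Nat.findGreatest (fun j => w j ≤ t) N + 1)
      (P := fun j => w j ≤ t) (n := N) (lt_add_one _) (by omega)
    simpa using not_le.1 (by simpa using h2)
  set i := Nat.findGreatest (fun j => w j ≤ t) N with hidef
  set a := w i with hadef
  set b := w (i + 1) with hbdef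
  have hab : a < b := hmono (lt_add_one i)
  have ha0 : 0 < a := lt_of_lt_of_le hw1pos (hmono.monotone hi1)
  have hb0 : 0 < b := ha0.trans hab
  have ht0 : 0 < t := lt_of_lt_of_le ha0 hit
  have haw₀ : w₀ ≤ a := by
    rw [← hw0]; exact (hmono.monotone (Nat.zero_le i))
  have hnd : ∀ u, a < u → u < b → ¬ IsDivisionNumber n (Set.Ici w₀) P u := by
    intro u h1 h2 hD
    obtain ⟨m, rfl⟩ := hall u hD
    have := hmono.lt_iff_lt.1 h1
    have := hmono.lt_iff_lt.1 h2
    omega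
  obtain ⟨k, hk⟩ := affine_seg n w₀ P hsys a b hab haw₀ hnd
  have hPt : P t = P a + (t - a) • eVec n k := hk t ⟨hit, hib.le⟩
  have hPb : P b = P a + (b - a) • eVec n k := hk b ⟨hab.le, le_refl b⟩
  set lam := (t - a) * b / ((b - a) * t) with hlam
  have hfa : a⁻¹ • P a ∈ convexHull ℝ {x : RVec n | ∃ i : ℕ, 1 ≤ i ∧ i ≤ s ∧
      x = (w i)⁻¹ • P (w i)} := by
    obtain ⟨r, h1, h2, h3⟩ := f_mod n w₀ P hw₀ w hw0 hmono hdiv hall ρ hρ hss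
      s hs hρw i hi1
    rw [hadef, h3]
    exact subset_convexHull ℝ _ ⟨r, h1, h2, rfl⟩
  have hfb : b⁻¹ • P b ∈ convexHull ℝ {x : RVec n | ∃ i : ℕ, 1 ≤ i ∧ i ≤ s ∧
      x = (w i)⁻¹ • P (w i)} := by
    obtain ⟨r, h1, h2, h3⟩ := f_mod n w₀ P hw₀ w hw0 hmono hdiv hall ρ hρ hss
      s hs hρw (i + 1) (by omega)
    rw [hbdef, h3]
    exact subset_convexHull ℝ _ ⟨r, h1, h2, rfl⟩
  have hlam0 : 0 ≤ lam :=
    div_nonneg (mul_nonneg (by linarith) hb0.le) (mul_pos (sub_pos.2 hab) ht0).le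
  have hlam1 : lam ≤ 1 := by
    rw [hlam, div_le_one (mul_pos (sub_pos.2 hab) ht0)]
    nlinarith [mul_nonneg ha0.le (sub_nonneg.2 hib.le)]
  have hcomb : t⁻¹ • P t =
      (1 - lam) • (a⁻¹ • P a) + lam • (b⁻¹ • P b) := by
    rw [hPt, hPb]
    funext idx
    simp only [Pi.smul_apply, Pi.add_apply, smul_eq_mul, hlam]
    have hba : b - a ≠ 0 := sub_ne_zero.2 hab.ne'
    field_simp
    ring
  rw [hcomb]
  exact (convex_convexHull ℝ _) hfa hfb (by linarith) hlam0 (by ring)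

/-- **Corollary (self-similar case).** Let `P` be a proper self-similar `n`-system on
`[w₀, ∞)` with division numbers `w₀ = w(0) < w(1) < ⋯`, with `ρ > 1` such that
`P(ρq) = ρP(q)` for `q ≥ w₀`, and `s ≥ 1` with `ρ w(1) = w(s+1)`.  Then `K(P)` is the
convex hull of the finite set `{w_i⁻¹ • P(w_i) : 1 ≤ i ≤ s}`. -/
theorem hull_of_self_similar (n : ℕ) (hn : 2 ≤ n) (w₀ : ℝ)
    (P : ℝ → RVec n) (hP : IsProperSys n (Set.Ici w₀) P)
    (w : ℕ → ℝ) (hw0 : w 0 = w₀) (hmono : StrictMono w)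
    (hdiv : ∀ i, IsDivisionNumber n (Set.Ici w₀) P (w i))
    (hall : ∀ q, IsDivisionNumber n (Set.Ici w₀) P q → ∃ i, q = w i)
    (ρ : ℝ) (hρ : 1 < ρ) (hss : ∀ q, w₀ ≤ q → P (ρ * q) = ρ • P q)
    (s : ℕ) (hs : 1 ≤ s) (hρw : ρ * w 1 = w (s + 1)) :
    convexHull ℝ (FSet n (Set.Ici w₀) P) =
      convexHull ℝ {x : RVec n | ∃ i : ℕ, 1 ≤ i ∧ i ≤ s ∧ x = (w i)⁻¹ • P (w i)} := by
  have hsys : IsNSystem n (Set.Ici w₀) P := hP.1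
  have hw₀0 : 0 ≤ w₀ := hsys.1 (Set.mem_Ici.2 (le_refl w₀))
  have hρ0 : (0:ℝ) < ρ := by linarith
  apply Set.Subset.antisymm
  · -- hull F ⊆ hull S'
    apply convexHull_min ?_ (convex_convexHull ℝ _)
    rintro x ⟨q, hqI, hqmono, hqtop, hlim⟩
    have hfin : Set.Finite {x : RVec n | ∃ i : ℕ, 1 ≤ i ∧ i ≤ s ∧
        x = (w i)⁻¹ • P (w i)} := by
      apply Set.Finite.subset
        (Set.Finite.image (fun i => (w i)⁻¹ • P (w i)) (Set.finite_Icc 1 s))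
      rintro y ⟨i, h1, h2, rfl⟩
      exact ⟨i, ⟨h1, h2⟩, rfl⟩
    have hclosed : IsClosed (convexHull ℝ {x : RVec n | ∃ i : ℕ, 1 ≤ i ∧ i ≤ s ∧
        x = (w i)⁻¹ • P (w i)}) := (hfin.isCompact_convexHull (𝕜 := ℝ)).isClosed
    refine hclosed.mem_of_tendsto hlim ?_
    filter_upwards [hqtop.eventually_ge_atTop (w 1)] with j hj
    exact seg_hull n w₀ P hsys hw₀0 w hw0 hmono hdiv hall ρ hρ hss s hs hρw
      (q j) hj
  · -- hull S' ⊆ hull F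
    apply convexHull_mono
    rintro x ⟨i, hi1, his, rfl⟩
    have hwi0 : 0 < w i := by
      have h01 := hmono (by omega : 0 < i)
      rw [hw0] at h01
      linarith
    have hwiw₀ : w₀ ≤ w i := by
      have h01 := hmono.monotone (Nat.zero_le i)
      rw [hw0] at h01
      exact h01
    have hmem : ∀ j : ℕ, ρ ^ j * w i ∈ Set.Ici w₀ := by
      intro j
      have h1 : (1:ℝ) ≤ ρ ^ j := one_le_pow₀ hρ.le
      exact Set.mem_Ici.2 (hwiw₀.trans (le_mul_of_one_le_left hwi0.le h1))
    have hPpow : ∀ j : ℕ, P (ρ ^ j * w i) = (ρ ^ j) • P (w i) := by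
      intro j
      induction j with
      | zero => simp
      | succ j IH =>
        have h1 : ρ ^ (j + 1) * w i = ρ * (ρ ^ j * w i) := by ring
        rw [h1, hss _ (Set.mem_Ici.1 (hmem j)), IH, smul_smul, ← pow_succ']
    refine ⟨fun j => ρ ^ j * w i, hmem, ?_, ?_, ?_⟩
    · intro j1 j2 h
      exact mul_lt_mul_of_pos_right (pow_lt_pow_right₀ hρ h) hwi0
    · exact (tendsto_pow_atTop_atTop_of_one_lt hρ).atTop_mul_const hwi0
    · have hval : ∀ j : ℕ, (ρ ^ j * w i)⁻¹ • P (ρ ^ j * w i) =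
          (w i)⁻¹ • P (w i) := by
        intro j
        rw [hPpow j, smul_smul]
        congr 1
        have hpj : (0:ℝ) < ρ ^ j := by positivity
        field_simp
      rw [show (fun j => (ρ ^ j * w i)⁻¹ • P (ρ ^ j * w i)) =
        fun _ => (w i)⁻¹ • P (w i) from funext hval]
      exact tendsto_const_nhds
end
end

section
/- Let n ≥ 2, let ν : [0,∞) → [0,∞) be a strictly increasing continuous function, and let P be an n-system on a subinterval I of [0,∞). For a point a = (a_1, …, a_n) ∈ [0,∞)^n write a^ν = (ν(a_1), …, ν(a_n)). Then there is a unique n-system whose image is {P(q)^ν : q ∈ I}; moreover, its switch points (respectively, its division points) are exactly the points a^ν where a runs over the switch points (respectively, the division points) of P. -/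
open Filter Set Pointwise Topology

noncomputable section

-- auxiliary lemmas

lemma eVec_fin_apply (n : ℕ) (k i : Fin n) : eVec n (k : ℕ) i = if i = k then 1 else 0 := by
  simp [eVec, Fin.val_eq_val]

lemma step_apply {n : ℕ} {P : ℝ → RVec n} {t q c : ℝ} {k : Fin n}
    (h : P t = P q + c • eVec n (k : ℕ)) (i : Fin n) :
    P t i = P q i + (if i = k then c else 0) := by
  rw [h]
  simp [eVec_fin_apply, Pi.add_apply, Pi.smul_apply, smul_eq_mul, mul_ite]

lemma sum_nu_step {n : ℕ} {P : ℝ → RVec n} (ν : ℝ → ℝ) {t q c : ℝ} {k : Fin n}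
    (h : P t = P q + c • eVec n (k : ℕ)) :
    ∑ i, ν (P t i) = (∑ i, ν (P q i)) + (ν (P q k + c) - ν (P q k)) := by
  have h1 : ∀ i, ν (P t i) = ν (P q i) + (if i = k then ν (P q k + c) - ν (P q k) else 0) := by
    intro i
    by_cases hik : i = k
    · subst hik; rw [step_apply h]; simp
    · rw [step_apply h]; simp [hik]
  simp_rw [h1]
  rw [Finset.sum_add_distrib]
  simp

lemma sys_cwa {n : ℕ} {I : Set ℝ} {P : ℝ → RVec n} (hP : IsNSystem n I P)
    {q : ℝ} (hq : q ∈ I) (i : Fin n) :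
    ContinuousWithinAt (fun t => P t i) I q := by
  obtain ⟨_, ε, hε, k, l, hleft, hright, _⟩ := (hP.2.2.2 q hq)
  have hl : ContinuousWithinAt (fun t => P t i) (I ∩ Icc (q - ε) q) q := by
    have hcong : ∀ t ∈ I ∩ Icc (q - ε) q, P t i = P q i + (if i = l then t - q else 0) :=
      fun t ht => step_apply (hleft t ht) i
    have hbase : ContinuousWithinAt (fun t => P q i + (if i = l then t - q else 0))
        (I ∩ Icc (q - ε) q) q := by
      by_cases hil : i = l
      · simp only [hil, if_pos rfl]
        exact (continuous_const.add (continuous_id.sub continuous_const)).continuousWithinAt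
      · simp only [hil, if_neg hil]
        exact continuousWithinAt_const
    exact hbase.congr hcong (by simp)
  have hr : ContinuousWithinAt (fun t => P t i) (I ∩ Icc q (q + ε)) q := by
    have hcong : ∀ t ∈ I ∩ Icc q (q + ε), P t i = P q i + (if i = k then t - q else 0) :=
      fun t ht => step_apply (hright t ht) i
    have hbase : ContinuousWithinAt (fun t => P q i + (if i = k then t - q else 0))
        (I ∩ Icc q (q + ε)) q := by
      by_cases hik : i = k
      · simp only [hik, if_pos rfl]
        exact (continuous_const.add (continuous_id.sub continuous_const)).continuousWithinAt
      · simp only [hik, if_neg hik]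
        exact continuousWithinAt_const
    exact hbase.congr hcong (by simp)
  have hmem : Icc (q - ε) (q + ε) ∈ 𝓝 q := Icc_mem_nhds (by linarith) (by linarith)
  rw [← continuousWithinAt_inter hmem]
  have hun : I ∩ Icc (q - ε) (q + ε) = (I ∩ Icc (q - ε) q) ∪ (I ∩ Icc q (q + ε)) := by
    rw [← inter_union_distrib_left, Icc_union_Icc_eq_Icc (by linarith) (by linarith)]
  rw [hun]
  exact hl.union hr

lemma sys_mono {n : ℕ} {I : Set ℝ} {P : ℝ → RVec n} (hP : IsNSystem n I P) (i : Fin n) :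
    MonotoneOn (fun t => P t i) I := by
  intro a ha b hb hab
  rcases eq_or_lt_of_le hab with rfl | hlt
  · exact le_rfl
  have hIcc : Icc a b ⊆ I := hP.2.1.out ha hb
  have hcont : ContinuousOn (fun t => P t i) (Icc a b) := fun x hx =>
    (sys_cwa hP (hIcc hx) i).mono hIcc
  set S := Icc a b ∩ (fun t => P t i) ⁻¹' Ici (P a i) with hSdef
  have hSclosed : IsClosed S :=
    hcont.preimage_isClosed_of_isClosed isClosed_Icc isClosed_Ici
  have haS : a ∈ S := ⟨⟨le_rfl, hab⟩, mem_preimage.mpr (mem_Ici.mpr le_rfl)⟩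
  have hbdd : BddAbove S := ⟨b, fun t ht => ht.1.2⟩
  have hcS : sSup S ∈ S := hSclosed.csSup_mem ⟨a, haS⟩ hbdd
  set c := sSup S with hc
  have hcI : c ∈ I := hIcc hcS.1
  rcases eq_or_lt_of_le hcS.1.2 with hcb | hcb
  · have h2 := hcS.2; rw [hcb] at h2; exact h2
  · obtain ⟨_, ε, hε, k, l, hleft, hright, _⟩ := hP.2.2.2 c hcI
    set u := min (c + ε) b with hu
    have hcu : c < u := lt_min (by linarith) hcb
    have huI : u ∈ Icc a b := ⟨le_trans hcS.1.1 hcu.le, min_le_right _ _⟩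
    have huright : u ∈ I ∩ Icc c (c + ε) := ⟨hIcc huI, hcu.le, min_le_left _ _⟩
    have hPu := step_apply (hright u huright) i
    have huS : u ∈ S := by
      refine ⟨huI, mem_preimage.mpr (mem_Ici.mpr ?_)⟩
      rw [hPu]
      have h2 : P a i ≤ P c i := hcS.2
      split <;> [linarith; linarith]
    exact absurd (le_csSup hbdd huS) (not_le.mpr hcu)

lemma sys_smono {n : ℕ} {I : Set ℝ} {P : ℝ → RVec n} {ν : ℝ → ℝ}
    (hP : IsNSystem n I P) (hmono : StrictMonoOn ν (Set.Ici 0)) :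
    StrictMonoOn (fun q => ∑ i, ν (P q i)) I := by
  intro a ha b hb hab
  have hPa := (hP.2.2.2 a ha).1
  have hPb := (hP.2.2.2 b hb).1
  have hsum : ∑ i, P a i < ∑ i, P b i := by rw [hPa.2.2, hPb.2.2]; exact hab
  obtain ⟨j, _, hj⟩ := Finset.exists_lt_of_sum_lt hsum
  apply Finset.sum_lt_sum
  · intro i _
    exact hmono.monotoneOn (hPa.1 i) (hPb.1 i) (sys_mono hP i ha hb hab.le)
  · exact ⟨j, Finset.mem_univ j, hmono (hPa.1 j) (hPb.1 j) hj⟩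

lemma sys_scwa {n : ℕ} {I : Set ℝ} {P : ℝ → RVec n} {ν : ℝ → ℝ}
    (hP : IsNSystem n I P) (hcont : ContinuousOn ν (Set.Ici 0))
    {q : ℝ} (hq : q ∈ I) :
    ContinuousWithinAt (fun t => ∑ i, ν (P t i)) I q := by
  apply tendsto_finset_sum
  intro i _
  have h1 : ContinuousWithinAt ν (Ici 0) (P q i) := hcont _ ((hP.2.2.2 q hq).1.1 i)
  have h2 : ContinuousWithinAt (fun t => P t i) I q := sys_cwa hP hq i
  have h3 : MapsTo (fun t => P t i) I (Ici 0) := fun y hy => (hP.2.2.2 y hy).1.1 i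
  exact ContinuousWithinAt.comp (g := ν) (f := fun t => P t i) (t := Ici 0) h1 h2 h3

-- continuing: transfer lemmas
lemma mem_interior_of_between {A : Set ℝ} (hA : A.OrdConnected) {q a b : ℝ}
    (ha : a ∈ A) (hb : b ∈ A) (h1 : a < q) (h2 : q < b) : q ∈ interior A :=
  mem_interior_iff_mem_nhds.mpr (mem_of_superset (Ioo_mem_nhds h1 h2)
    (fun x hx => hA.out ha hb ⟨hx.1.le, hx.2.le⟩))

lemma exists_between_of_mem_interior {A : Set ℝ} {q : ℝ} (hq : q ∈ interior A) :
    ∃ a ∈ A, ∃ b ∈ A, a < q ∧ q < b := by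
  obtain ⟨δ, hδ, hball⟩ := Metric.mem_nhds_iff.mp (mem_interior_iff_mem_nhds.mp hq)
  refine ⟨q - δ/2, hball ?_, q + δ/2, hball ?_, by linarith, by linarith⟩
  · rw [Metric.mem_ball, Real.dist_eq, show q - δ/2 - q = -(δ/2) by ring, abs_neg,
      abs_of_pos (by linarith)]
    linarith
  · rw [Metric.mem_ball, Real.dist_eq, show q + δ/2 - q = δ/2 by ring,
      abs_of_pos (by linarith)]
    linarith

lemma frontier_iff_of_mem {A : Set ℝ} {q : ℝ} (hq : q ∈ A) :
    q ∈ frontier A ↔ q ∉ interior A := by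
  rw [frontier, mem_diff]
  exact ⟨fun h => h.2, fun h => ⟨subset_closure hq, h⟩⟩

noncomputable def nuS {n : ℕ} (ν : ℝ → ℝ) (P : ℝ → RVec n) (q : ℝ) : ℝ := ∑ i, ν (P q i)

lemma nuS_smono {n : ℕ} {I : Set ℝ} {P : ℝ → RVec n} {ν : ℝ → ℝ}
    (hP : IsNSystem n I P) (hmono : StrictMonoOn ν (Set.Ici 0)) :
    StrictMonoOn (nuS ν P) I := sys_smono hP hmono

lemma nuS_cwa {n : ℕ} {I : Set ℝ} {P : ℝ → RVec n} {ν : ℝ → ℝ}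
    (hP : IsNSystem n I P) (hcont : ContinuousOn ν (Set.Ici 0))
    {q : ℝ} (hq : q ∈ I) : ContinuousWithinAt (nuS ν P) I q := sys_scwa hP hcont hq

lemma transfer_key {n : ℕ} {I : Set ℝ} {P : ℝ → RVec n} {ν : ℝ → ℝ} {σ : ℝ → ℝ}
    (hσ : ∀ q ∈ I, σ (nuS ν P q) = q)
    {q : ℝ} (hq : q ∈ I) (k : Fin n) {t : ℝ} (htI : t ∈ I)
    (hstep : P t = P q + (t - q) • eVec n (k:ℕ)) :
    (fun i => ν (P (σ (nuS ν P t)) i)) =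
      (fun i => ν (P (σ (nuS ν P q)) i)) + (nuS ν P t - nuS ν P q) • eVec n (k:ℕ) := by
  funext i
  have hPt := step_apply hstep i
  have hst : nuS ν P t = nuS ν P q + (ν (P q k + (t - q)) - ν (P q k)) :=
    sum_nu_step ν hstep
  simp only [Pi.add_apply, Pi.smul_apply, smul_eq_mul, eVec_fin_apply]
  rw [hσ t htI, hσ q hq, hPt, hst]
  by_cases hik : i = k
  · subst hik; simp
  · simp [hik]

lemma transfer_right {n : ℕ} {I : Set ℝ} {P : ℝ → RVec n} {ν : ℝ → ℝ} {σ : ℝ → ℝ}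
    (hP : IsNSystem n I P) (hmono : StrictMonoOn ν (Set.Ici 0))
    (hσ : ∀ q ∈ I, σ (nuS ν P q) = q)
    {q : ℝ} (hq : q ∈ I) {ε : ℝ} (hε : 0 < ε) (k : Fin n)
    (hright : ∀ t ∈ I ∩ Icc q (q + ε), P t = P q + (t - q) • eVec n (k:ℕ)) :
    ∃ ε' > (0:ℝ), ∀ t' ∈ (nuS ν P '' I) ∩ Icc (nuS ν P q) (nuS ν P q + ε'),
      (fun i => ν (P (σ t') i)) =
        (fun i => ν (P (σ (nuS ν P q)) i)) + (t' - nuS ν P q) • eVec n (k:ℕ) := by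
  have hsm : StrictMonoOn (nuS ν P) I := nuS_smono hP hmono
  by_cases hu : ∃ u ∈ I, q < u
  · obtain ⟨u, huI, hqu⟩ := hu
    have hu'I : min u (q + ε) ∈ I :=
      hP.2.1.out hq huI ⟨le_min hqu.le (by linarith), min_le_left _ _⟩
    have hqu' : q < min u (q + ε) := lt_min hqu (by linarith)
    refine ⟨nuS ν P (min u (q + ε)) - nuS ν P q, sub_pos.mpr (hsm hq hu'I hqu'), ?_⟩
    rintro t' ⟨⟨t, htI, rfl⟩, h1, h2⟩
    have hqt : q ≤ t := by
      by_contra h; push_neg at h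
      exact absurd h1 (not_le.mpr (hsm htI hq h))
    have htu : t ≤ min u (q + ε) := by
      by_contra h; push_neg at h
      have := hsm hu'I htI h
      linarith
    exact transfer_key hσ hq k htI
      (hright t ⟨htI, hqt, le_trans htu (min_le_right _ _)⟩)
  · push_neg at hu
    refine ⟨1, one_pos, ?_⟩
    rintro t' ⟨⟨t, htI, rfl⟩, h1, _⟩
    have hqt : q ≤ t := by
      by_contra h; push_neg at h
      exact absurd h1 (not_le.mpr (hsm htI hq h))
    have htq : t = q := le_antisymm (hu t htI) hqt
    subst htq
    exact transfer_key hσ hq k htI (hright t ⟨htI, le_rfl, by linarith⟩)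

lemma transfer_left {n : ℕ} {I : Set ℝ} {P : ℝ → RVec n} {ν : ℝ → ℝ} {σ : ℝ → ℝ}
    (hP : IsNSystem n I P) (hmono : StrictMonoOn ν (Set.Ici 0))
    (hσ : ∀ q ∈ I, σ (nuS ν P q) = q)
    {q : ℝ} (hq : q ∈ I) {ε : ℝ} (hε : 0 < ε) (l : Fin n)
    (hleft : ∀ t ∈ I ∩ Icc (q - ε) q, P t = P q + (t - q) • eVec n (l:ℕ)) :
    ∃ ε' > (0:ℝ), ∀ t' ∈ (nuS ν P '' I) ∩ Icc (nuS ν P q - ε') (nuS ν P q),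
      (fun i => ν (P (σ t') i)) =
        (fun i => ν (P (σ (nuS ν P q)) i)) + (t' - nuS ν P q) • eVec n (l:ℕ) := by
  have hsm : StrictMonoOn (nuS ν P) I := nuS_smono hP hmono
  by_cases hu : ∃ u ∈ I, u < q
  · obtain ⟨u, huI, hqu⟩ := hu
    have hu'I : max u (q - ε) ∈ I :=
      hP.2.1.out huI hq ⟨le_max_left _ _, max_le hqu.le (by linarith)⟩
    have hqu' : max u (q - ε) < q := max_lt hqu (by linarith)
    refine ⟨nuS ν P q - nuS ν P (max u (q - ε)), sub_pos.mpr (hsm hu'I hq hqu'), ?_⟩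
    rintro t' ⟨⟨t, htI, rfl⟩, h1, h2⟩
    have hqt : t ≤ q := by
      by_contra h; push_neg at h
      exact absurd h2 (not_le.mpr (hsm hq htI h))
    have htu : max u (q - ε) ≤ t := by
      by_contra h; push_neg at h
      have := hsm htI hu'I h
      linarith
    exact transfer_key hσ hq l htI
      (hleft t ⟨htI, le_trans (le_max_right _ _) htu, hqt⟩)
  · push_neg at hu
    refine ⟨1, one_pos, ?_⟩
    rintro t' ⟨⟨t, htI, rfl⟩, _, h2⟩
    have hqt : t ≤ q := by
      by_contra h; push_neg at h
      exact absurd h2 (not_le.mpr (hsm hq htI h))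
    have htq : t = q := le_antisymm hqt (hu t htI)
    subst htq
    exact transfer_key hσ hq l htI (hleft t ⟨htI, by constructor <;> linarith⟩)

lemma exists_right_close {n : ℕ} {I : Set ℝ} {P : ℝ → RVec n} {ν : ℝ → ℝ}
    (hP : IsNSystem n I P) (hcont : ContinuousOn ν (Set.Ici 0))
    {q : ℝ} (hq : q ∈ interior I) {m : ℝ} (hm : 0 < m) :
    ∃ t ∈ I, q < t ∧ nuS ν P t < nuS ν P q + m := by
  have hqI : q ∈ I := interior_subset hq
  have hV : (nuS ν P) ⁻¹' Iio (nuS ν P q + m) ∈ 𝓝[I] q :=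
    nuS_cwa hP hcont hqI (Iio_mem_nhds (by linarith))
  have hrestrict : 𝓝[Ioi q] q = 𝓝[Ioi q ∩ I] q :=
    nhdsWithin_restrict' (Ioi q) (mem_interior_iff_mem_nhds.mp hq)
  have hne : (𝓝[Ioi q ∩ I] q).NeBot := by rw [← hrestrict]; infer_instance
  have hV' : (nuS ν P) ⁻¹' Iio (nuS ν P q + m) ∈ 𝓝[Ioi q ∩ I] q :=
    nhdsWithin_mono q inter_subset_right hV
  obtain ⟨t, htV, htq, htI⟩ :=
    Filter.nonempty_of_mem (Filter.inter_mem hV' self_mem_nhdsWithin)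
  exact ⟨t, htI, htq, htV⟩

lemma exists_left_close {n : ℕ} {I : Set ℝ} {P : ℝ → RVec n} {ν : ℝ → ℝ}
    (hP : IsNSystem n I P) (hcont : ContinuousOn ν (Set.Ici 0))
    {q : ℝ} (hq : q ∈ interior I) {m : ℝ} (hm : 0 < m) :
    ∃ t ∈ I, t < q ∧ nuS ν P q - m < nuS ν P t := by
  have hqI : q ∈ I := interior_subset hq
  have hV : (nuS ν P) ⁻¹' Ioi (nuS ν P q - m) ∈ 𝓝[I] q :=
    nuS_cwa hP hcont hqI (Ioi_mem_nhds (by linarith))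
  have hrestrict : 𝓝[Iio q] q = 𝓝[Iio q ∩ I] q :=
    nhdsWithin_restrict' (Iio q) (mem_interior_iff_mem_nhds.mp hq)
  have hne : (𝓝[Iio q ∩ I] q).NeBot := by rw [← hrestrict]; infer_instance
  have hV' : (nuS ν P) ⁻¹' Ioi (nuS ν P q - m) ∈ 𝓝[Iio q ∩ I] q :=
    nhdsWithin_mono q inter_subset_right hV
  obtain ⟨t, htV, htq, htI⟩ :=
    Filter.nonempty_of_mem (Filter.inter_mem hV' self_mem_nhdsWithin)
  exact ⟨t, htI, htq, htV⟩

/-- **Proposition (the system `P^ν`).** Let `ν : [0,∞) → [0,∞)` be strictly increasing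
and continuous, and let `P` be an `n`-system on `I`.  Then there is a unique `n`-system
whose image is `{P(q)^ν : q ∈ I}` (where `a^ν = (ν(a₁), …, ν(a_n))`); moreover its
switch points (resp. division points) are exactly the points `a^ν` with `a` a switch
point (resp. division point) of `P`. -/
theorem exists_unique_nu_system (n : ℕ) (hn : 2 ≤ n) (ν : ℝ → ℝ)
    (hmono : StrictMonoOn ν (Set.Ici 0)) (hcont : ContinuousOn ν (Set.Ici 0))
    (hmaps : ∀ a : ℝ, 0 ≤ a → 0 ≤ ν a)
    (I : Set ℝ) (P : ℝ → RVec n) (hP : IsNSystem n I P) :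
    ∃ (J : Set ℝ) (Q : ℝ → RVec n),
      IsNSystem n J Q ∧
      Q '' J = (fun a : RVec n => fun i => ν (a i)) '' (P '' I) ∧
      (∀ (J' : Set ℝ) (Q' : ℝ → RVec n), IsNSystem n J' Q' →
        Q' '' J' = (fun a : RVec n => fun i => ν (a i)) '' (P '' I) →
        J' = J ∧ Set.EqOn Q' Q J) ∧
      {x : RVec n | ∃ q, IsSwitchNumber n J Q q ∧ Q q = x}
        = (fun a : RVec n => fun i => ν (a i)) ''
            {x : RVec n | ∃ q, IsSwitchNumber n I P q ∧ P q = x} ∧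
      {x : RVec n | ∃ q, IsDivisionNumber n J Q q ∧ Q q = x}
        = (fun a : RVec n => fun i => ν (a i)) ''
            {x : RVec n | ∃ q, IsDivisionNumber n I P q ∧ P q = x} := by
  classical
  have hIoc := hP.2.1
  have hIint := hP.2.2.1
  have hsys := hP.2.2.2
  set s : ℝ → ℝ := nuS ν P with hs_def
  have hsm : StrictMonoOn s I := nuS_smono hP hmono
  have hsinj : InjOn s I := hsm.injOn
  set J : Set ℝ := s '' I with hJ_def
  have hex : ∀ t', t' ∈ J → ∃ q, q ∈ I ∧ s q = t' := fun t' ht' => ht'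
  choose! σ hσI hσs using hex
  have hσs' : ∀ q ∈ I, σ (s q) = q := fun q hq =>
    hsinj (hσI _ (mem_image_of_mem s hq)) hq (hσs _ (mem_image_of_mem s hq))
  set Q : ℝ → RVec n := fun t i => ν (P (σ t) i) with hQ_def
  have hQs : ∀ q ∈ I, Q (s q) = fun i => ν (P q i) := by
    intro q hq
    funext i
    show ν (P (σ (s q)) i) = ν (P q i)
    rw [hσs' q hq]
  -- ordconnectedness of J
  have hJoc : J.OrdConnected := by
    constructor
    rintro x ⟨a, ha, rfl⟩ y ⟨b, hb, rfl⟩ z hz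
    rcases le_total a b with hab | hab
    · have hIcc : Icc a b ⊆ I := hIoc.out ha hb
      have hcont' : ContinuousOn s (Icc a b) := fun x hx =>
        (nuS_cwa hP hcont (hIcc hx)).mono hIcc
      obtain ⟨w, hw, hwz⟩ := intermediate_value_Icc hab hcont' hz
      exact ⟨w, hIcc hw, hwz⟩
    · have h1 : s b ≤ s a := hsm.monotoneOn hb ha hab
      have hz' : z = s a := le_antisymm (le_trans hz.2 h1) hz.1
      exact hz' ▸ ⟨a, ha, rfl⟩
  -- interior correspondence
  have hint_fwd : ∀ q ∈ interior I, s q ∈ interior J := by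
    intro q hq
    obtain ⟨a, ha, b, hb, haq, hqb⟩ := exists_between_of_mem_interior hq
    have hq' : q ∈ I := interior_subset hq
    exact mem_interior_of_between hJoc (mem_image_of_mem s ha) (mem_image_of_mem s hb)
      (hsm ha hq' haq) (hsm hq' hb hqb)
  have hint_bwd : ∀ q ∈ I, s q ∈ interior J → q ∈ interior I := by
    intro q hq hsq
    obtain ⟨a', ha', b', hb', h1, h2⟩ := exists_between_of_mem_interior hsq
    obtain ⟨a, ha, rfl⟩ := ha'
    obtain ⟨b, hb, rfl⟩ := hb'
    have haq : a < q := by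
      by_contra h; push_neg at h
      exact absurd h1 (not_lt.mpr (hsm.monotoneOn hq ha h))
    have hqb : q < b := by
      by_contra h; push_neg at h
      exact absurd h2 (not_lt.mpr (hsm.monotoneOn hb hq h))
    exact mem_interior_of_between hIoc ha hb haq hqb
  -- J ⊆ [0, ∞)
  have hJsub : J ⊆ Ici 0 := by
    rintro t' ⟨q, hq, rfl⟩
    exact mem_Ici.mpr (Finset.sum_nonneg fun i _ => hmaps _ ((hsys q hq).1.1 i))
  have hJint : (interior J).Nonempty := by
    obtain ⟨q, hq⟩ := hIint
    exact ⟨s q, hint_fwd q hq⟩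
  -- Q is an n-system on J
  have hNQ : IsNSystem n J Q := by
    refine ⟨hJsub, hJoc, hJint, ?_⟩
    rintro t' ⟨q, hq, rfl⟩
    constructor
    · refine ⟨?_, ?_, ?_⟩
      · intro i
        show 0 ≤ ν (P (σ (s q)) i)
        rw [hσs' q hq]
        exact hmaps _ ((hsys q hq).1.1 i)
      · intro i j hij
        show ν (P (σ (s q)) i) ≤ ν (P (σ (s q)) j)
        rw [hσs' q hq]
        exact hmono.monotoneOn ((hsys q hq).1.1 i) ((hsys q hq).1.1 j)
          ((hsys q hq).1.2.1 hij)
      · show ∑ i, ν (P (σ (s q)) i) = s q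
        rw [hσs' q hq]
        rfl
    · obtain ⟨ε, hε, k, l, hleft, hright, hS3⟩ := (hsys q hq).2
      obtain ⟨ε1, hε1, hr1⟩ := transfer_right hP hmono hσs' hq hε k hright
      obtain ⟨ε2, hε2, hl1⟩ := transfer_left hP hmono hσs' hq hε l hleft
      refine ⟨min ε1 ε2, lt_min hε1 hε2, k, l, ?_, ?_, ?_⟩
      · intro t' ht'
        have hm2 : min ε1 ε2 ≤ ε2 := min_le_right _ _
        exact hl1 t' ⟨ht'.1, by have := ht'.2.1; linarith, ht'.2.2⟩
      · intro t' ht'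
        have hm1 : min ε1 ε2 ≤ ε1 := min_le_left _ _
        exact hr1 t' ⟨ht'.1, ht'.2.1, by have := ht'.2.2; linarith⟩
      · intro hintJ hlk i hli hik
        have hqint : q ∈ interior I := hint_bwd q hq hintJ
        have hPeq := hS3 hqint hlk i hli hik
        show ν (P (σ (s q)) i) = ν (P (σ (s q)) l)
        rw [hσs' q hq, hPeq]
  -- image equality
  have himg : Q '' J = (fun a : RVec n => fun i => ν (a i)) '' (P '' I) := by
    ext x
    constructor
    · rintro ⟨t', ⟨q, hq, rfl⟩, rfl⟩
      exact ⟨P q, ⟨q, hq, rfl⟩, (hQs q hq).symm⟩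
    · rintro ⟨y, ⟨q, hq, rfl⟩, rfl⟩
      exact ⟨s q, mem_image_of_mem s hq, hQs q hq⟩
  -- uniqueness
  have huniq : ∀ (J' : Set ℝ) (Q' : ℝ → RVec n), IsNSystem n J' Q' →
      Q' '' J' = (fun a : RVec n => fun i => ν (a i)) '' (P '' I) →
      J' = J ∧ Set.EqOn Q' Q J := by
    intro J' Q' hQ' him
    have hsumQ' : ∀ t' ∈ J', ∑ i, Q' t' i = t' := fun t' ht' => (hQ'.2.2.2 t' ht').1.2.2
    have hJ'J : J' = J := by
      ext t'
      constructor
      · intro ht'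
        have hmem : Q' t' ∈ (fun a : RVec n => fun i => ν (a i)) '' (P '' I) :=
          him ▸ mem_image_of_mem Q' ht'
        obtain ⟨y, ⟨q, hq, rfl⟩, hy⟩ := hmem
        have hts : t' = s q := by
          have h1 := hsumQ' t' ht'
          have h2 : ∑ i, Q' t' i = s q := by rw [← hy]; rfl
          linarith
        exact hts ▸ mem_image_of_mem s hq
      · rintro ⟨q, hq, rfl⟩
        have hmem : (fun i => ν (P q i)) ∈ Q' '' J' :=
          him ▸ ⟨P q, ⟨q, hq, rfl⟩, rfl⟩
        obtain ⟨t', ht', hQt'⟩ := hmem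
        have hts : t' = s q := by
          have h1 := hsumQ' t' ht'
          have h2 : ∑ i, Q' t' i = s q := by rw [hQt']; rfl
          linarith
        exact hts ▸ ht'
    refine ⟨hJ'J, ?_⟩
    rintro t' ⟨q, hq, rfl⟩
    have ht'J' : s q ∈ J' := hJ'J ▸ mem_image_of_mem s hq
    have hmem : Q' (s q) ∈ (fun a : RVec n => fun i => ν (a i)) '' (P '' I) :=
      him ▸ mem_image_of_mem Q' ht'J'
    obtain ⟨y, ⟨q1, hq1, rfl⟩, hy⟩ := hmem
    have hsq1 : s q1 = s q := by
      have h1 := hsumQ' (s q) ht'J'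
      have h2 : ∑ i, Q' (s q) i = s q1 := by rw [← hy]; rfl
      linarith
    have hq1q : q1 = q := hsinj hq1 hq hsq1
    rw [← hy, hq1q, hQs q hq]
  -- generic switch/division correspondence
  have hkey : ∀ (rel : Fin n → Fin n → Prop), ∀ q ∈ I,
      ((q ∈ frontier I ∨ (q ∈ interior I ∧ ∃ ε > (0:ℝ), ∃ k l : Fin n, rel k l ∧
        (∀ t ∈ I ∩ Icc (q - ε) q, P t = P q + (t - q) • eVec n (l:ℕ)) ∧
        (∀ t ∈ I ∩ Icc q (q + ε), P t = P q + (t - q) • eVec n (k:ℕ)))) ↔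
      (s q ∈ frontier J ∨ (s q ∈ interior J ∧ ∃ ε > (0:ℝ), ∃ k l : Fin n, rel k l ∧
        (∀ t ∈ J ∩ Icc (s q - ε) (s q), Q t = Q (s q) + (t - s q) • eVec n (l:ℕ)) ∧
        (∀ t ∈ J ∩ Icc (s q) (s q + ε), Q t = Q (s q) + (t - s q) • eVec n (k:ℕ))))) := by
    intro rel q hq
    constructor
    · rintro (hfr | ⟨hqint, ε, hε, k, l, hrel, hleft, hright⟩)
      · left
        rw [frontier_iff_of_mem (mem_image_of_mem s hq)]
        rw [frontier_iff_of_mem hq] at hfr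
        exact fun h => hfr (hint_bwd q hq h)
      · right
        refine ⟨hint_fwd q hqint, ?_⟩
        obtain ⟨ε1, hε1, hr1⟩ := transfer_right hP hmono hσs' hq hε k hright
        obtain ⟨ε2, hε2, hl1⟩ := transfer_left hP hmono hσs' hq hε l hleft
        refine ⟨min ε1 ε2, lt_min hε1 hε2, k, l, hrel, ?_, ?_⟩
        · intro t' ht'
          have hm2 : min ε1 ε2 ≤ ε2 := min_le_right _ _
          exact hl1 t' ⟨ht'.1, by have := ht'.2.1; linarith, ht'.2.2⟩
        · intro t' ht'
          have hm1 : min ε1 ε2 ≤ ε1 := min_le_left _ _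
          exact hr1 t' ⟨ht'.1, ht'.2.1, by have := ht'.2.2; linarith⟩
    · rintro (hfr | ⟨hsint, ε', hε', k', l', hrel, hlQ, hrQ⟩)
      · left
        rw [frontier_iff_of_mem hq]
        rw [frontier_iff_of_mem (mem_image_of_mem s hq)] at hfr
        exact fun h => hfr (hint_fwd q h)
      · right
        have hqint : q ∈ interior I := hint_bwd q hq hsint
        refine ⟨hqint, ?_⟩
        obtain ⟨ε0, hε0, k, l, hleft, hright, _⟩ := (hsys q hq).2
        obtain ⟨ε1, hε1, hr1⟩ := transfer_right hP hmono hσs' hq hε0 k hright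
        obtain ⟨ε2, hε2, hl1⟩ := transfer_left hP hmono hσs' hq hε0 l hleft
        have hkk : k = k' := by
          obtain ⟨t, htI, hqt, hclose⟩ := exists_right_close hP hcont hqint
            (lt_min hε1 hε')
          have htJ : s t ∈ J := mem_image_of_mem s htI
          have hlt : s q < s t := hsm hq htI hqt
          have hmin1 : min ε1 ε' ≤ ε1 := min_le_left _ _
          have hmin2 : min ε1 ε' ≤ ε' := min_le_right _ _
          have e1 := hr1 (s t) ⟨htJ, hlt.le, by linarith⟩
          have e2 := hrQ (s t) ⟨htJ, hlt.le, by linarith⟩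
          by_contra hne
          have d1 : Q (s t) k = Q (s q) k + (s t - s q) * eVec n (k:ℕ) k := congrFun e1 k
          have d2 : Q (s t) k = Q (s q) k + (s t - s q) * eVec n (k':ℕ) k := congrFun e2 k
          rw [eVec_fin_apply, if_pos rfl] at d1
          rw [eVec_fin_apply, if_neg hne] at d2
          linarith
        have hll : l = l' := by
          obtain ⟨t, htI, hqt, hclose⟩ := exists_left_close hP hcont hqint
            (lt_min hε2 hε')
          have htJ : s t ∈ J := mem_image_of_mem s htI
          have hlt : s t < s q := hsm htI hq hqt
          have hmin1 : min ε2 ε' ≤ ε2 := min_le_left _ _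
          have hmin2 : min ε2 ε' ≤ ε' := min_le_right _ _
          have e1 := hl1 (s t) ⟨htJ, by linarith, hlt.le⟩
          have e2 := hlQ (s t) ⟨htJ, by linarith, hlt.le⟩
          by_contra hne
          have d1 : Q (s t) l = Q (s q) l + (s t - s q) * eVec n (l:ℕ) l := congrFun e1 l
          have d2 : Q (s t) l = Q (s q) l + (s t - s q) * eVec n (l':ℕ) l := congrFun e2 l
          rw [eVec_fin_apply, if_pos rfl] at d1
          rw [eVec_fin_apply, if_neg hne] at d2
          linarith
        rw [← hkk, ← hll] at hrel
        exact ⟨ε0, hε0, k, l, hrel, hleft, hright⟩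
  -- switch set equality
  have hswitch : {x : RVec n | ∃ q, IsSwitchNumber n J Q q ∧ Q q = x}
      = (fun a : RVec n => fun i => ν (a i)) ''
          {x : RVec n | ∃ q, IsSwitchNumber n I P q ∧ P q = x} := by
    ext x
    constructor
    · rintro ⟨q', ⟨hq'J, hcond⟩, rfl⟩
      obtain ⟨q, hq, rfl⟩ := hq'J
      refine ⟨P q, ⟨q, ⟨hq, (hkey (fun k l => k < l) q hq).mpr hcond⟩, rfl⟩, ?_⟩
      exact (hQs q hq).symm
    · rintro ⟨x', ⟨q, ⟨hq, hcond⟩, rfl⟩, rfl⟩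
      exact ⟨s q, ⟨mem_image_of_mem s hq, (hkey (fun k l => k < l) q hq).mp hcond⟩,
        hQs q hq⟩
  have hdiv : {x : RVec n | ∃ q, IsDivisionNumber n J Q q ∧ Q q = x}
      = (fun a : RVec n => fun i => ν (a i)) ''
          {x : RVec n | ∃ q, IsDivisionNumber n I P q ∧ P q = x} := by
    ext x
    constructor
    · rintro ⟨q', ⟨hq'J, hcond⟩, rfl⟩
      obtain ⟨q, hq, rfl⟩ := hq'J
      refine ⟨P q, ⟨q, ⟨hq, (hkey (fun k l => k ≠ l) q hq).mpr hcond⟩, rfl⟩, ?_⟩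
      exact (hQs q hq).symm
    · rintro ⟨x', ⟨q, ⟨hq, hcond⟩, rfl⟩, rfl⟩
      exact ⟨s q, ⟨mem_image_of_mem s hq, (hkey (fun k l => k ≠ l) q hq).mp hcond⟩,
        hQs q hq⟩
  exact ⟨J, Q, hNQ, himg, huniq, hswitch, hdiv⟩
end
end

section
/- Let n ≥ 2, let q_0 > 0, let R be an n-system on [q_0, ∞), and let ε > 0. Then there exists u ≥ q_0 such that {q^{-1}R(q) : q ≥ u} ⊆ F(R) + [−ε, ε]^n. Moreover, for each u ≥ q_0 there exists v > u such that F(R) ⊆ {q^{-1}R(q) : u ≤ q ≤ v} + [−ε, ε]^n. -/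
open Filter Set Pointwise Topology

noncomputable section

/-- **Lemma (approximation of `F(R)`).** Let `R` be an `n`-system on `[q₀, ∞)` and
`ε > 0`.  Then there is `u ≥ q₀` with `{q⁻¹R(q) : q ≥ u} ⊆ F(R) + [-ε,ε]^n`, and for
each `u ≥ q₀` there is `v > u` with `F(R) ⊆ {q⁻¹R(q) : u ≤ q ≤ v} + [-ε,ε]^n`. -/
theorem selection_lemma (n : ℕ) (hn : 2 ≤ n) (q₀ : ℝ) (hq₀ : 0 < q₀)
    (R : ℝ → RVec n) (hR : IsNSystem n (Set.Ici q₀) R) (ε : ℝ) (hε : 0 < ε) :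
    (∃ u : ℝ, q₀ ≤ u ∧
      {x : RVec n | ∃ q : ℝ, u ≤ q ∧ x = q⁻¹ • R q}
        ⊆ FSet n (Set.Ici q₀) R + cubeNbhd n ε) ∧
    (∀ u : ℝ, q₀ ≤ u → ∃ v : ℝ, u < v ∧
      FSet n (Set.Ici q₀) R
        ⊆ {x : RVec n | ∃ q : ℝ, u ≤ q ∧ q ≤ v ∧ x = q⁻¹ • R q} + cubeNbhd n ε) := by
  classical
  have hsys := hR.2.2.2
  have hval : ∀ q : ℝ, q₀ ≤ q → (q⁻¹ • R q) ∈ Set.Icc (0 : RVec n) 1 := by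
    intro q hq
    have hq0 : 0 < q := lt_of_lt_of_le hq₀ hq
    obtain ⟨⟨h1, h2, h3⟩, -⟩ := hsys q hq
    rw [Set.mem_Icc]
    constructor
    · rw [Pi.le_def]
      intro i
      simp only [Pi.smul_apply, smul_eq_mul, Pi.zero_apply]
      exact mul_nonneg (inv_nonneg.2 hq0.le) (h1 i)
    · rw [Pi.le_def]
      intro i
      simp only [Pi.smul_apply, smul_eq_mul, Pi.one_apply]
      have hle : R q i ≤ q := by
        calc R q i ≤ ∑ j, R q j :=
              Finset.single_le_sum (fun j _ => h1 j) (Finset.mem_univ i)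
          _ = q := h3
      calc q⁻¹ * R q i ≤ q⁻¹ * q :=
            mul_le_mul_of_nonneg_left hle (inv_nonneg.2 hq0.le)
        _ = 1 := inv_mul_cancel₀ hq0.ne'
  constructor
  · by_contra hcon
    push_neg at hcon
    have H : ∀ u : ℝ, ∃ q : ℝ, max u q₀ ≤ q ∧
        (q⁻¹ • R q) ∉ FSet n (Set.Ici q₀) R + cubeNbhd n ε := by
      intro u
      obtain ⟨x, hxA, hxB⟩ := Set.not_subset.1 (hcon (max u q₀) (le_max_right _ _))
      obtain ⟨q, hq1, rfl⟩ := hxA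
      exact ⟨q, hq1, hxB⟩
    choose g hg1 hg2 using H
    set s : ℕ → ℝ := fun i => Nat.rec (g q₀) (fun _ prev => g (prev + 1)) i with hs_def
    have hs_succ : ∀ i, s (i + 1) = g (s i + 1) := fun i => rfl
    have hs_ge : ∀ i, q₀ ≤ s i := by
      intro i
      cases i with
      | zero => exact le_trans (le_max_right _ _) (hg1 q₀)
      | succ j => exact le_trans (le_max_right _ _) (hg1 (s j + 1))
    have hs_lt : ∀ i, s i < s (i + 1) := by
      intro i
      have := hg1 (s i + 1)
      have h2 := le_trans (le_max_left _ _) this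
      rw [hs_succ]
      linarith
    have hsmono : StrictMono s := strictMono_nat_of_lt_succ hs_lt
    have hs_lower : ∀ i : ℕ, q₀ + i ≤ s i := by
      intro i
      induction i with
      | zero => simpa using hs_ge 0
      | succ j ih =>
        have h2 : s j + 1 ≤ s (j + 1) := by
          rw [hs_succ]; exact le_trans (le_max_left _ _) (hg1 _)
        push_cast
        linarith
    have hstop : Tendsto s atTop atTop := by
      apply tendsto_atTop_mono hs_lower
      exact tendsto_atTop_add_const_left _ _ tendsto_natCast_atTop_atTop
    have hbad : ∀ i, ((s i)⁻¹ • R (s i)) ∉ FSet n (Set.Ici q₀) R + cubeNbhd n ε := by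
      intro i
      cases i with
      | zero => exact hg2 q₀
      | succ j => exact hg2 (s j + 1)
    obtain ⟨x, hxIcc, φ, hφ, hconv⟩ :=
      (isCompact_Icc : IsCompact (Set.Icc (0 : RVec n) 1)).tendsto_subseq
        (fun i => hval (s i) (hs_ge i))
    have hxF : x ∈ FSet n (Set.Ici q₀) R :=
      ⟨s ∘ φ, fun i => hs_ge _, hsmono.comp hφ, hstop.comp hφ.tendsto_atTop, hconv⟩
    obtain ⟨i, hi⟩ := (Metric.tendsto_nhds.1 hconv ε hε).exists
    refine hbad (φ i) (Set.mem_add.2 ⟨x, hxF, (s (φ i))⁻¹ • R (s (φ i)) - x, ?_, by abel⟩)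
    intro j
    have h1 : dist (((s (φ i))⁻¹ • R (s (φ i))) j) (x j) ≤
        dist ((s (φ i))⁻¹ • R (s (φ i))) x := dist_le_pi_dist _ _ j
    have h2 : |((s (φ i))⁻¹ • R (s (φ i)) - x) j| =
        dist (((s (φ i))⁻¹ • R (s (φ i))) j) (x j) := by
      rw [Real.dist_eq, Pi.sub_apply]
    rw [h2]
    exact le_of_lt (lt_of_le_of_lt h1 hi)
  · intro u hu
    set F := FSet n (Set.Ici q₀) R with hF_def
    rcases Set.eq_empty_or_nonempty F with hFe | hFne
    · exact ⟨u + 1, by linarith, by rw [hFe]; exact Set.empty_subset _⟩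
    have hFsub : F ⊆ Set.Icc (0 : RVec n) 1 := by
      rintro x ⟨q, hqmem, hmono, htop, hlim⟩
      exact isClosed_Icc.mem_of_tendsto hlim
        (Filter.Eventually.of_forall fun i => hval _ (hqmem i))
    have hTB : TotallyBounded F :=
      (isCompact_Icc : IsCompact (Set.Icc (0 : RVec n) 1)).totallyBounded.subset hFsub
    have hd : {p : RVec n × RVec n | dist p.1 p.2 < ε / 2} ∈ uniformity (RVec n) :=
      Metric.dist_mem_uniformity (by linarith)
    obtain ⟨t, hts, htfin, hcov⟩ := totallyBounded_iff_subset.1 hTB _ hd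
    have hQ : ∀ y ∈ F, ∃ q : ℝ, u ≤ q ∧ dist (q⁻¹ • R q) y < ε / 2 := by
      rintro y ⟨q, hqmem, hmono, htop, hlim⟩
      have h1 : ∀ᶠ i in atTop, u ≤ q i := htop.eventually_ge_atTop u
      have h2 : ∀ᶠ i in atTop, dist ((q i)⁻¹ • R (q i)) y < ε / 2 :=
        Metric.tendsto_nhds.1 hlim _ (by linarith)
      obtain ⟨i, hi1, hi2⟩ := (h1.and h2).exists
      exact ⟨q i, hi1, hi2⟩
    choose! Q hQu hQd using hQ
    have hbdd : BddAbove (Q '' t) := (htfin.image Q).bddAbove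
    refine ⟨max (u + 1) (sSup (Q '' t)), lt_of_lt_of_le (by linarith) (le_max_left _ _), ?_⟩
    intro x hx
    obtain ⟨y, hyt, hxy⟩ := Set.mem_iUnion₂.1 (hcov hx)
    have hyF : y ∈ F := hts hyt
    have hdxy : dist x y < ε / 2 := hxy
    have hqv : Q y ≤ max (u + 1) (sSup (Q '' t)) :=
      le_max_of_le_right (le_csSup hbdd (Set.mem_image_of_mem Q hyt))
    have hdist : dist x ((Q y)⁻¹ • R (Q y)) < ε := by
      calc dist x ((Q y)⁻¹ • R (Q y)) ≤ dist x y + dist y ((Q y)⁻¹ • R (Q y)) :=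
            dist_triangle _ _ _
        _ < ε / 2 + ε / 2 := by
            have := hQd y hyF
            rw [dist_comm] at this
            exact add_lt_add hdxy this
        _ = ε := by ring
    refine Set.mem_add.2 ⟨(Q y)⁻¹ • R (Q y), ⟨Q y, hQu y hyF, hqv, rfl⟩,
      x - (Q y)⁻¹ • R (Q y), ?_, by abel⟩
    intro j
    have h1 : dist (x j) (((Q y)⁻¹ • R (Q y)) j) ≤ dist x ((Q y)⁻¹ • R (Q y)) :=
      dist_le_pi_dist _ _ j
    have h2 : |(x - (Q y)⁻¹ • R (Q y)) j| = dist (x j) (((Q y)⁻¹ • R (Q y)) j) := by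
      rw [Real.dist_eq, Pi.sub_apply]
    rw [h2]
    exact le_of_lt (lt_of_le_of_lt h1 hdist)
end
end

section
/- Let n ≥ 2, let δ > 0, let R = (R_1, …, R_n) : [u, v] → Δ_n be a rigid n-system of mesh δ on a compact subinterval [u, v] of (0,∞), and let b ≥ 0 be a multiple of δ. Then the map P : [u + nb, v + nb] → Δ_n given by P(q) = (b + R_1(q − nb), …, b + R_n(q − nb)) is also a rigid n-system of mesh δ, and for each q ∈ [u, v] one has ‖(q + nb)^{-1}P(q + nb) − q^{-1}R(q)‖_∞ ≤ (n + 1)b/(u + nb). -/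
open Filter Set Pointwise Topology

noncomputable section

/-- **Lemma (translation of a rigid system).** Let `R` be a rigid `n`-system of mesh
`δ` on a compact subinterval `[u,v]` of `(0,∞)` and let `b ≥ 0` be a multiple of `δ`.
Then `P(q) = (b + R₁(q - nb), …, b + R_n(q - nb))` is a rigid `n`-system of mesh `δ` on
`[u + nb, v + nb]`, and `‖(q+nb)⁻¹P(q+nb) - q⁻¹R(q)‖_∞ ≤ (n+1)b/(u+nb)` for
`q ∈ [u,v]`. -/
theorem translate_rigid_system (n : ℕ) (hn : 2 ≤ n) (δ : ℝ) (hδ : 0 < δ)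
    (u v : ℝ) (hu : 0 < u) (huv : u < v)
    (R : ℝ → RVec n) (hR : IsRigid n δ (Set.Icc u v) R)
    (b : ℝ) (hb : 0 ≤ b) (hbδ : ∃ m : ℤ, b = δ * m) :
    IsRigid n δ (Set.Icc (u + n * b) (v + n * b))
      (fun q => (fun i => b + R (q - n * b) i : RVec n)) ∧
    ∀ q ∈ Set.Icc u v,
      ‖(q + n * b)⁻¹ • (fun i => b + R q i : RVec n) - q⁻¹ • R q‖
        ≤ (n + 1) * b / (u + n * b) := by
  obtain ⟨m₀, hm₀⟩ := hbδ
  obtain ⟨⟨hSys, hIcl, hIpos, hND⟩, hRig⟩ := hR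
  obtain ⟨hI0, hIoc, hIint, hS⟩ := hSys
  have hn0 : (0:ℝ) ≤ (n:ℝ) := Nat.cast_nonneg n
  have hn1 : (1:ℝ) ≤ (n:ℝ) := by exact_mod_cast Nat.one_le_of_lt hn
  set c : ℝ := (n:ℝ) * b with hcdef
  have hc0 : 0 ≤ c := mul_nonneg hn0 hb
  have hbc : b ≤ c := by nlinarith
  have hmem : ∀ q : ℝ, q ∈ Set.Icc (u+c) (v+c) → q - c ∈ Set.Icc u v := by
    intro q hq
    simp only [Set.mem_Icc] at hq ⊢
    constructor <;> linarith
  -- transfer of local linear equations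
  have shift : ∀ (s q' : ℝ) (k : Fin n),
      R s = R q' + (s - q') • eVec n k →
      (fun i => b + R s i) = ((fun i => b + R q' i) + (s - q') • eVec n k : RVec n) := by
    intro s q' k h
    funext i
    have h2 := congrFun h i
    simp only [Pi.add_apply, Pi.smul_apply, smul_eq_mul] at h2 ⊢
    linarith
  have shift' : ∀ (s q' : ℝ) (k : Fin n),
      (fun i => b + R s i) = ((fun i => b + R q' i) + (s - q') • eVec n k : RVec n) →
      R s = R q' + (s - q') • eVec n k := by
    intro s q' k h
    funext i
    have h2 := congrFun h i
    simp only [Pi.add_apply, Pi.smul_apply, smul_eq_mul] at h2 ⊢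
    linarith
  -- switch numbers of the translated system come from switch numbers of R
  have hswitch : ∀ q, IsSwitchNumber n (Set.Icc (u+c) (v+c))
      (fun q => (fun i => b + R (q - c) i : RVec n)) q →
      IsSwitchNumber n (Set.Icc u v) R (q - c) := by
    intro q hq
    obtain ⟨hqI, hcase⟩ := hq
    refine ⟨hmem q hqI, ?_⟩
    rcases hcase with hfr | ⟨hintq, ε, hε, k, ℓ, hkl, hleft, hright⟩
    · left
      rw [frontier_Icc (by linarith : u + c ≤ v + c)] at hfr
      rw [frontier_Icc (le_of_lt huv)]
      rcases hfr with h | h <;> simp only [Set.mem_insert_iff, Set.mem_singleton_iff] at *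
      · left; linarith
      · right; linarith
    · right
      rw [interior_Icc] at hintq
      refine ⟨?_, ε, hε, k, ℓ, hkl, ?_, ?_⟩
      · rw [interior_Icc]
        simp only [Set.mem_Ioo] at hintq ⊢
        constructor <;> linarith
      · intro t' ht'
        have htmem : t' + c ∈ Set.Icc (u+c) (v+c) ∩ Set.Icc (q - ε) q := by
          simp only [Set.mem_inter_iff, Set.mem_Icc] at ht' ⊢
          obtain ⟨⟨h1, h2⟩, h3, h4⟩ := ht'
          exact ⟨⟨by linarith, by linarith⟩, by linarith, by linarith⟩
        have hp := hleft (t' + c) htmem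
        have e1 : t' + c - c = t' := by ring
        have e2 : t' + c - q = t' - (q - c) := by ring
        simp only [] at hp
        rw [e1, e2] at hp
        exact shift' _ _ _ hp
      · intro t' ht'
        have htmem : t' + c ∈ Set.Icc (u+c) (v+c) ∩ Set.Icc q (q + ε) := by
          simp only [Set.mem_inter_iff, Set.mem_Icc] at ht' ⊢
          obtain ⟨⟨h1, h2⟩, h3, h4⟩ := ht'
          exact ⟨⟨by linarith, by linarith⟩, by linarith, by linarith⟩
        have hp := hright (t' + c) htmem
        have e1 : t' + c - c = t' := by ring
        have e2 : t' + c - q = t' - (q - c) := by ring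
        simp only [] at hp
        rw [e1, e2] at hp
        exact shift' _ _ _ hp
  constructor
  · refine ⟨⟨⟨?_, ?_, ?_, ?_⟩, isClosed_Icc, ?_, ?_⟩, ?_⟩
    · intro q hq
      have h1 := hq.1
      simp only [Set.mem_Ici]
      linarith
    · exact Set.ordConnected_Icc
    · rw [interior_Icc]
      exact ⟨u + c + (v - u) / 2, Set.mem_Ioo.mpr ⟨by linarith, by linarith⟩⟩
    · intro q hq
      have hq' := hmem q hq
      obtain ⟨⟨hpos, hmono, hsum⟩, ε, hε, k, ℓ, hL, hRt, hS3⟩ := hS (q - c) hq'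
      refine ⟨⟨?_, ?_, ?_⟩, ε, hε, k, ℓ, ?_, ?_, ?_⟩
      · intro i
        show (0:ℝ) ≤ b + R (q - c) i
        have := hpos i; linarith
      · intro i j hij
        have := hmono hij
        show b + R (q - c) i ≤ b + R (q - c) j
        linarith
      · show (∑ i, (b + R (q - c) i)) = q
        rw [Finset.sum_add_distrib, Finset.sum_const, Finset.card_univ, Fintype.card_fin,
          nsmul_eq_mul, hsum]
        ring
      · intro t ht
        have ht' : t - c ∈ Set.Icc u v ∩ Set.Icc (q - c - ε) (q - c) := by
          simp only [Set.mem_inter_iff, Set.mem_Icc] at ht ⊢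
          obtain ⟨⟨h1, h2⟩, h3, h4⟩ := ht
          exact ⟨⟨by linarith, by linarith⟩, by linarith, by linarith⟩
        have hr := shift _ _ _ (hL (t - c) ht')
        have e2 : t - c - (q - c) = t - q := by ring
        rw [e2] at hr
        exact hr
      · intro t ht
        have ht' : t - c ∈ Set.Icc u v ∩ Set.Icc (q - c) (q - c + ε) := by
          simp only [Set.mem_inter_iff, Set.mem_Icc] at ht ⊢
          obtain ⟨⟨h1, h2⟩, h3, h4⟩ := ht
          exact ⟨⟨by linarith, by linarith⟩, by linarith, by linarith⟩
        have hr := shift _ _ _ (hRt (t - c) ht')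
        have e2 : t - c - (q - c) = t - q := by ring
        rw [e2] at hr
        exact hr
      · intro hintq hlk i hli hik
        have hint' : q - c ∈ interior (Set.Icc u v) := by
          rw [interior_Icc] at hintq ⊢
          simp only [Set.mem_Ioo] at hintq ⊢
          constructor <;> linarith
        have := hS3 hint' hlk i hli hik
        show b + R (q - c) i = b + R (q - c) ℓ
        linarith
    · intro q hq
      have h1 := hq.1
      simp only [Set.mem_Ioi]
      linarith
    · intro q hq
      have hsw := hswitch q hq
      obtain ⟨hpos, hmono⟩ := hND (q - c) hsw
      constructor
      · intro i
        show (0:ℝ) < b + R (q - c) i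
        have := hpos i; linarith
      · intro i j hij
        have := hmono hij
        show b + R (q - c) i < b + R (q - c) j
        linarith
    · intro q hq i
      obtain ⟨m, hm⟩ := hRig (q - c) (hswitch q hq) i
      exact ⟨m₀ + m, by push_cast; rw [hm, hm₀]; ring⟩
  · intro q hq
    simp only [Set.mem_Icc] at hq
    have hq0 : 0 < q := lt_of_lt_of_le hu hq.1
    have hD0 : 0 ≤ ((n:ℝ) + 1) * b / (u + c) := by positivity
    rw [pi_norm_le_iff_of_nonneg hD0]
    intro i
    obtain ⟨⟨hpos, hmono, hsum⟩, _⟩ := hS q (Set.mem_Icc.mpr hq)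
    have hle : R q i ≤ q := by
      have h2 := Finset.single_le_sum (fun j _ => hpos j) (Finset.mem_univ i)
      rw [hsum] at h2
      exact h2
    have hri := hpos i
    set r := R q i with hrdef
    have hval : ((q + c)⁻¹ • (fun i => b + R q i : RVec n) - q⁻¹ • R q) i
        = (q * b - r * c) / (q * (q + c)) := by
      simp only [Pi.sub_apply, Pi.smul_apply, smul_eq_mul]
      field_simp
      ring
    rw [Real.norm_eq_abs, hval, abs_le]
    have hqc : 0 < q * (q + c) := by positivity
    have huc : 0 < u + c := by linarith
    constructor
    · rw [neg_le, ← neg_div, div_le_div_iff₀ hqc huc]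
      nlinarith [mul_nonneg (mul_nonneg hq0.le hb) huc.le,
        mul_nonneg (mul_nonneg (sub_nonneg.mpr hle) hc0) huc.le,
        mul_nonneg (mul_nonneg hq0.le hc0) (by linarith [hq.1] : (0:ℝ) ≤ q - u),
        mul_nonneg (mul_nonneg hq0.le hb) hqc.le]
    · rw [div_le_div_iff₀ hqc huc]
      nlinarith [mul_nonneg (mul_nonneg hri hc0) huc.le,
        mul_nonneg (mul_nonneg hq0.le hb) (by linarith [hq.1] : (0:ℝ) ≤ q - u),
        mul_nonneg (mul_nonneg (mul_nonneg hn0 hb) hq0.le) (by linarith : (0:ℝ) ≤ q + c)]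
end
end
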